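/- arXiv:1507.00393 — 7 statements merged into one kernel-verified Lean document; each statement's English description precedes it below -/
import Mathlib

section
/- There exists a unique bounded function q : [0,∞) → [0,∞) such that q(t) = e^t for 0 ≤ t < 1 and q(t) = ∫_{t-1}^t q(u) du for t ≥ 1. -/
open MeasureTheory Set Filter

noncomputable def gg (k : ℕ) (t : ℝ) : ℝ :=
  (-1)^k * Real.exp (t - k) * ((t - k)^k + k * (t - k)^(k-1)) / (k.factorial : ℝ)

noncomputable def GG (k : ℕ) (t : ℝ) : ℝ :=
  (-1)^k * Real.exp (t - k) * (t - k)^k / (k.factorial : ℝ)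

noncomputable def QQ (m : ℕ) (t : ℝ) : ℝ := ∑ k ∈ Finset.range (m+1), gg k t

noncomputable def qq (t : ℝ) : ℝ := if t < 1 then Real.exp t else QQ ⌊t⌋₊ t

lemma gg_cont (k : ℕ) : Continuous (gg k) := by
  unfold gg; fun_prop

lemma QQ_cont (m : ℕ) : Continuous (QQ m) := by
  unfold QQ; exact continuous_finset_sum _ fun k _ => gg_cont k

lemma GG_deriv (k : ℕ) (t : ℝ) : HasDerivAt (GG k) (gg k t) t := by
  have h1 : HasDerivAt (fun s : ℝ => s - (k:ℝ)) 1 t := (hasDerivAt_id t).sub_const _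
  have he : HasDerivAt (fun s : ℝ => Real.exp (s - k)) (Real.exp (t - k)) t := by
    simpa using h1.exp
  have hp : HasDerivAt (fun s : ℝ => (s - (k:ℝ))^k) ((k : ℝ) * (t - k)^(k-1)) t := by
    simpa using h1.fun_pow k
  have H2 := ((he.const_mul ((-1:ℝ)^k)).mul hp).div_const (k.factorial : ℝ)
  refine H2.congr_deriv ?_
  unfold gg; ring

lemma QQ_sum_deriv (m : ℕ) (t : ℝ) :
    HasDerivAt (fun s => ∑ k ∈ Finset.range (m+1), GG k s) (QQ m t) t :=
  HasDerivAt.fun_sum fun k _ => GG_deriv k t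

lemma QQ_integral (m : ℕ) (a b : ℝ) :
    ∫ u in a..b, QQ m u
      = ∑ k ∈ Finset.range (m+1), GG k b - ∑ k ∈ Finset.range (m+1), GG k a := by
  rw [intervalIntegral.integral_eq_sub_of_hasDerivAt (fun u _ => QQ_sum_deriv m u)
    ((QQ_cont m).intervalIntegrable a b)]

lemma QQ_zero (t : ℝ) : QQ 0 t = Real.exp t := by
  simp [QQ, gg]

lemma gg_self_zero {k : ℕ} (hk : 2 ≤ k) : gg k (k : ℝ) = 0 := by
  have h1 : ((k:ℝ) - k) = 0 := by ring
  have hk0 : k ≠ 0 := by omega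
  have hk1 : k - 1 ≠ 0 := by omega
  simp [gg, h1, zero_pow hk0, zero_pow hk1]

lemma qq_of_lt_one {t : ℝ} (h : t < 1) : qq t = Real.exp t := if_pos h

lemma qq_floor_eq {t : ℝ} (n : ℕ) (hn : 1 ≤ n) (h1 : (n:ℝ) ≤ t) (h2 : t < (n:ℝ)+1) :
    qq t = QQ n t := by
  have ht0 : (0:ℝ) ≤ t := le_trans (by positivity) h1
  have hfl : ⌊t⌋₊ = n := (Nat.floor_eq_iff ht0).2 ⟨h1, h2⟩
  have hnlt : ¬ t < 1 := not_lt.2 (le_trans (by exact_mod_cast hn) h1)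
  simp [qq, hnlt, hfl]

lemma qq_piece (n : ℕ) (hn : 1 ≤ n) {t : ℝ} (h1 : (n:ℝ) ≤ t) (h2 : t ≤ (n:ℝ)+1) :
    qq t = QQ n t := by
  rcases lt_or_eq_of_le h2 with h | h
  · exact qq_floor_eq n hn h1 h
  · -- t = n+1
    have h1' : ((n+1 : ℕ):ℝ) ≤ t := by push_cast; linarith
    have h2' : t < ((n+1 : ℕ):ℝ) + 1 := by push_cast; linarith
    have := qq_floor_eq (n+1) (by omega) h1' h2'
    rw [this]
    have : QQ (n+1) t = QQ n t + gg (n+1) t := Finset.sum_range_succ _ _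
    rw [this]
    have ht : t = ((n+1 : ℕ) : ℝ) := by push_cast; linarith
    rw [ht, gg_self_zero (by omega), add_zero]
-- integrability of qq
lemma qq_intOn (n : ℕ) : IntegrableOn qq (Icc (n:ℝ) ((n:ℝ)+1)) volume := by
  rcases Nat.eq_zero_or_pos n with h | h
  · subst h
    simp only [Nat.cast_zero, zero_add]
    have hexp : IntegrableOn (fun t => Real.exp t) (Icc (0:ℝ) 1) volume :=
      (Real.continuous_exp.integrableOn_Icc)
    apply hexp.congr_fun_ae
    rw [EventuallyEq, ae_restrict_iff' measurableSet_Icc, ae_iff]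
    apply measure_mono_null _ (measure_singleton (1:ℝ))
    intro x hx
    simp only [mem_setOf_eq, _root_.not_imp] at hx
    rcases hx with ⟨hx1, hx2⟩
    by_contra hne
    have : x < 1 := lt_of_le_of_ne hx1.2 (by simpa using hne)
    exact hx2 ((qq_of_lt_one this).symm)
  · have : IntegrableOn (QQ n) (Icc (n:ℝ) ((n:ℝ)+1)) volume :=
      (QQ_cont n).integrableOn_Icc
    exact this.congr_fun (fun x hx => (qq_piece n h hx.1 hx.2).symm) measurableSet_Icc

lemma qq_intInt_le {a b : ℝ} (ha : 0 ≤ a) (hab : a ≤ b) : IntervalIntegrable qq volume a b := by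
  have big : IntegrableOn qq (⋃ m ∈ Finset.range (⌊b⌋₊ + 1), Icc (m:ℝ) ((m:ℝ)+1)) volume :=
    (integrableOn_finset_iUnion).2 fun m _ => qq_intOn m
  rw [intervalIntegrable_iff_integrableOn_Ioc_of_le hab]
  apply big.mono_set
  intro x hx
  have hx0 : 0 ≤ x := le_trans ha (le_of_lt hx.1)
  simp only [Finset.mem_range, mem_iUnion, mem_Icc]
  refine ⟨⌊x⌋₊, ?_, ⟨Nat.floor_le hx0, (Nat.lt_floor_add_one x).le⟩⟩
  have : ⌊x⌋₊ ≤ ⌊b⌋₊ := Nat.floor_le_floor hx.2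
  omega

lemma qq_intInt {a b : ℝ} (ha : 0 ≤ a) (hb : 0 ≤ b) : IntervalIntegrable qq volume a b := by
  rcases le_total a b with hab | hab
  · exact qq_intInt_le ha hab
  · exact (qq_intInt_le hb hab).symm
lemma gg_succ (k : ℕ) (t : ℝ) : gg (k+1) t = GG (k+1) t - GG k (t-1) := by
  unfold gg GG
  have h1 : ((k+1 : ℕ) : ℝ) = (k:ℝ)+1 := by push_cast; ring
  have h2 : (k+1) - 1 = k := by omega
  have h3 : ((k+1).factorial : ℝ) = ((k:ℝ)+1) * (k.factorial : ℝ) := by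
    rw [Nat.factorial_succ]; push_cast; ring
  have h4 : t - ((k+1:ℕ):ℝ) = (t - 1) - (k:ℝ) := by push_cast; ring
  rw [h2, h3, h4]
  have hf : (k.factorial : ℝ) ≠ 0 := by positivity
  have hk1 : ((k:ℝ)+1) ≠ 0 := by positivity
  field_simp
  push_cast; ring

lemma GG_self_zero {n : ℕ} (hn : 1 ≤ n) : GG n (n:ℝ) = 0 := by
  have h1 : ((n:ℝ) - n) = 0 := by ring
  simp [GG, h1, zero_pow (by omega : n ≠ 0)]

lemma QQ_sum_identity (n : ℕ) (t : ℝ) :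
    QQ n t = ∑ k ∈ Finset.range (n+1), GG k t - ∑ k ∈ Finset.range n, GG k (t-1) := by
  unfold QQ
  rw [Finset.sum_range_succ' (fun k => gg k t) n,
      Finset.sum_range_succ' (fun k => GG k t) n]
  have h0 : gg 0 t = GG 0 t := by unfold gg GG; norm_num
  rw [h0]
  have : ∀ k ∈ Finset.range n, gg (k+1) t = GG (k+1) t - GG k (t-1) :=
    fun k _ => gg_succ k t
  rw [Finset.sum_congr rfl this, Finset.sum_sub_distrib]
  ring

lemma qq_inteq {t : ℝ} (ht : 1 ≤ t) : qq t = ∫ u in (t-1)..t, qq u := by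
  set n := ⌊t⌋₊ with hn
  have ht0 : (0:ℝ) ≤ t := by linarith
  have hn1 : 1 ≤ n := Nat.le_floor (by exact_mod_cast ht)
  have hnt : (n:ℝ) ≤ t := Nat.floor_le ht0
  have htn : t < (n:ℝ) + 1 := Nat.lt_floor_add_one t
  have hn1R : (1:ℝ) ≤ (n:ℝ) := by exact_mod_cast hn1
  -- split
  have i1 : IntervalIntegrable qq volume (t-1) (n:ℝ) := qq_intInt (by linarith) (by linarith)
  have i2 : IntervalIntegrable qq volume (n:ℝ) t := qq_intInt (by linarith) ht0
  have hsplit : (∫ u in (t-1)..(n:ℝ), qq u) + (∫ u in (n:ℝ)..t, qq u) = ∫ u in (t-1)..t, qq u :=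
    intervalIntegral.integral_add_adjacent_intervals i1 i2
  -- first piece
  have e1 : (∫ u in (t-1)..(n:ℝ), qq u) = ∫ u in (t-1)..(n:ℝ), QQ (n-1) u := by
    apply intervalIntegral.integral_congr_ae
    rw [ae_iff]
    apply measure_mono_null _ (measure_singleton ((n:ℝ)))
    intro x hx
    simp only [mem_setOf_eq, _root_.not_imp] at hx
    rcases hx with ⟨hx1, hx2⟩
    by_contra hne
    rw [uIoc_of_le (by linarith : t-1 ≤ (n:ℝ))] at hx1
    have hxlt : x < (n:ℝ) := lt_of_le_of_ne hx1.2 (by simpa using hne)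
    have hxge : (n:ℝ) - 1 ≤ x := by
      have : (n:ℝ) - 1 ≤ t - 1 := by linarith
      linarith [hx1.1]
    apply hx2
    rcases Nat.lt_or_ge n 2 with h2 | h2
    · -- n = 1 : piece is exp
      have hn1' : n = 1 := by omega
      have hx01 : x < 1 := by rw [hn1'] at hxlt; exact_mod_cast hxlt
      rw [qq_of_lt_one hx01, hn1']
      simp [QQ_zero]
    · -- n ≥ 2
      have hcast : ((n-1 : ℕ):ℝ) = (n:ℝ) - 1 := by
        have : 1 ≤ n := hn1; push_cast [this]; ring
      apply qq_floor_eq (n-1) (by omega)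
      · rw [hcast]; exact hxge
      · rw [hcast]; linarith
  have e1' : (∫ u in (t-1)..(n:ℝ), QQ (n-1) u)
      = ∑ k ∈ Finset.range n, GG k (n:ℝ) - ∑ k ∈ Finset.range n, GG k (t-1) := by
    have h := QQ_integral (n-1) (t-1) (n:ℝ)
    have hnn : n - 1 + 1 = n := by omega
    rwa [hnn] at h
  -- second piece
  have e2 : (∫ u in (n:ℝ)..t, qq u) = ∫ u in (n:ℝ)..t, QQ n u := by
    apply intervalIntegral.integral_congr
    intro x hx
    rw [uIcc_of_le hnt] at hx
    exact qq_piece n hn1 hx.1 (by linarith [hx.2])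
  have e2' : (∫ u in (n:ℝ)..t, QQ n u)
      = ∑ k ∈ Finset.range (n+1), GG k t - ∑ k ∈ Finset.range (n+1), GG k (n:ℝ) :=
    QQ_integral n (n:ℝ) t
  have hqt : qq t = QQ n t := qq_piece n hn1 hnt (by linarith)
  have hGGn : GG n (n:ℝ) = 0 := GG_self_zero hn1
  have hsumn : ∑ k ∈ Finset.range (n+1), GG k (n:ℝ) = ∑ k ∈ Finset.range n, GG k (n:ℝ) := by
    rw [Finset.sum_range_succ, hGGn, add_zero]
  rw [← hsplit, e1, e1', e2, e2', hsumn, hqt, QQ_sum_identity]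
  ring
-- Gronwall-type iteration lemma
lemma gron {a b M : ℝ} {g : ℝ → ℝ} (hM : 0 ≤ M)
    (hint : IntervalIntegrable g volume a b)
    (hbd : ∀ t ∈ Icc a b, g t ≤ M)
    (h : ∀ t ∈ Icc a b, g t ≤ ∫ s in a..t, g s) :
    ∀ t ∈ Icc a b, g t ≤ 0 := by
  have key : ∀ n : ℕ, ∀ t ∈ Icc a b, g t ≤ M * (t - a)^n / (n.factorial : ℝ) := by
    intro n
    induction n with
    | zero => intro t ht; simpa using hbd t ht
    | succ n ih =>
      intro t ht
      have hta : a ≤ t := ht.1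
      have hab : a ≤ b := hta.trans ht.2
      have hInt1 : IntervalIntegrable g volume a t := by
        apply hint.mono_set
        rw [uIcc_of_le hta, uIcc_of_le hab]
        exact Icc_subset_Icc le_rfl ht.2
      have hInt2 : IntervalIntegrable (fun s => M * (s - a)^n / (n.factorial : ℝ)) volume a t := by
        apply Continuous.intervalIntegrable; fun_prop
      have step1 : g t ≤ ∫ s in a..t, g s := h t ht
      have step2 : (∫ s in a..t, g s) ≤ ∫ s in a..t, M * (s - a)^n / (n.factorial : ℝ) := by
        apply intervalIntegral.integral_mono_on hta hInt1 hInt2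
        intro s hs
        exact ih s ⟨hs.1, hs.2.trans ht.2⟩
      have step3 : (∫ s in a..t, M * (s - a)^n / (n.factorial : ℝ))
          = M * (t - a)^(n+1) / ((n+1).factorial : ℝ) := by
        have hD : ∀ s : ℝ, HasDerivAt (fun u => M * (u - a)^(n+1) / ((n+1).factorial : ℝ))
            (M * (s - a)^n / (n.factorial : ℝ)) s := by
          intro s
          have h1 : HasDerivAt (fun u : ℝ => u - a) 1 s := (hasDerivAt_id s).sub_const _
          have hp : HasDerivAt (fun u : ℝ => (u - a)^(n+1)) (((n:ℝ)+1) * (s - a)^n) s := by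
            simpa using h1.fun_pow (n+1)
          have := (hp.const_mul M).div_const (((n+1).factorial : ℝ))
          refine this.congr_deriv ?_
          rw [Nat.factorial_succ]
          push_cast
          field_simp
        rw [intervalIntegral.integral_eq_sub_of_hasDerivAt (fun s _ => hD s) hInt2]
        simp
      calc g t ≤ _ := step1
        _ ≤ _ := step2
        _ = _ := step3
  intro t ht
  have htend : Tendsto (fun n : ℕ => M * (t - a)^n / (n.factorial : ℝ)) atTop (nhds 0) := by
    have := FloorSemiring.tendsto_pow_div_factorial_atTop (t - a)
    have h2 := this.const_mul M
    simpa [mul_div_assoc] using h2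
  exact ge_of_tendsto' htend (fun n => key n t ht)
lemma qq_one : qq 1 = Real.exp 1 - 1 := by
  have h := qq_piece 1 le_rfl (t := 1) (by norm_num) (by norm_num)
  rw [h]
  unfold QQ
  rw [Finset.sum_range_succ, Finset.sum_range_one]
  unfold gg
  norm_num
  ring

lemma qq_bounds_aux : ∀ n : ℕ, ∀ t : ℝ, 0 ≤ t → t ≤ (n:ℝ)+1 →
    0 ≤ qq t ∧ qq t ≤ Real.exp 1 := by
  intro n
  induction n with
  | zero =>
    intro t ht0 ht1
    simp only [Nat.cast_zero, zero_add] at ht1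
    rcases lt_or_eq_of_le ht1 with h | h
    · rw [qq_of_lt_one h]
      exact ⟨(Real.exp_pos t).le, Real.exp_le_exp.2 (le_of_lt h)⟩
    · rw [h, qq_one]
      constructor
      · linarith [Real.add_one_le_exp (1:ℝ)]
      · linarith
  | succ n ih =>
    intro t ht0 ht1
    set a : ℝ := (n:ℝ) + 1 with ha
    rcases le_total t a with h | h
    · exact ih t ht0 h
    · -- t ∈ [a, a+1]; apply gron on the whole interval
      have ht1' : t ≤ a + 1 := by push_cast at ht1 ⊢; linarith
      have ha1 : (1:ℝ) ≤ a := by rw [ha]; linarith [Nat.cast_nonneg (α := ℝ) n]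
      have ha0 : (0:ℝ) ≤ a := by linarith
      -- bound M for qq on [a, a+1]
      obtain ⟨M0, hM0⟩ := (isCompact_Icc (a := a) (b := a+1)).exists_bound_of_continuousOn
        (QQ_cont (n+1)).continuousOn
      have hqQ : ∀ s ∈ Icc a (a+1), qq s = QQ (n+1) s := by
        intro s hs
        have : ((n+1 : ℕ):ℝ) = a := by push_cast; ring
        exact qq_piece (n+1) (by omega) (by rw [this]; exact hs.1) (by rw [this]; exact hs.2)
      have hqbd : ∀ s ∈ Icc a (a+1), |qq s| ≤ M0 := by
        intro s hs; rw [hqQ s hs]; simpa using hM0 s hs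
      -- the integral equation rearrangement
      have hIH : ∀ s : ℝ, 0 ≤ s → s ≤ a → 0 ≤ qq s ∧ qq s ≤ Real.exp 1 := fun s h1 h2 => ih s h1 h2
      have key : ∀ s ∈ Icc a (a+1),
          (qq s = (∫ u in (s-1)..a, qq u) + ∫ u in a..s, qq u) := by
        intro s hs
        have hs1 : (1:ℝ) ≤ s := le_trans ha1 hs.1
        have h1 : IntervalIntegrable qq volume (s-1) a := qq_intInt (by linarith [hs.1]) ha0
        have h2 : IntervalIntegrable qq volume a s := qq_intInt ha0 (by linarith)
        rw [qq_inteq hs1, ← intervalIntegral.integral_add_adjacent_intervals h1 h2]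
      -- upper bound via gron
      have hup : ∀ s ∈ Icc a (a+1), qq s ≤ Real.exp 1 := by
        have hg : ∀ s ∈ Icc a (a+1), (qq s - Real.exp 1) ≤ ∫ u in a..s, (qq u - Real.exp 1) := by
          intro s hs
          have hs1a : s - 1 ≤ a := by linarith [hs.2]
          have hs1b : 0 ≤ s - 1 := by linarith [le_trans ha1 hs.1]
          have h1 : IntervalIntegrable qq volume (s-1) a := qq_intInt hs1b ha0
          have hmono : (∫ u in (s-1)..a, qq u) ≤ ∫ u in (s-1)..a, (fun _ => Real.exp 1) u := by
            apply intervalIntegral.integral_mono_on hs1a h1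
              (intervalIntegrable_const)
            intro x hx
            exact (hIH x (by linarith [hx.1]) hx.2).2
          have hconst : (∫ u in (s-1)..a, (fun _ => Real.exp 1) u) = (a - (s-1)) * Real.exp 1 := by
            simp [smul_eq_mul]
          have h2 : IntervalIntegrable qq volume a s := qq_intInt ha0 (by linarith [hs.1, ha0])
          have hsub : (∫ u in a..s, (qq u - Real.exp 1))
              = (∫ u in a..s, qq u) - (s - a) * Real.exp 1 := by
            rw [intervalIntegral.integral_sub h2 intervalIntegrable_const]
            simp [smul_eq_mul]
          rw [hsub]
          have := key s hs
          rw [this]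
          rw [hconst] at hmono
          linarith
        have hgbd : ∀ s ∈ Icc a (a+1), qq s - Real.exp 1 ≤ M0 + Real.exp 1 := by
          intro s hs
          have := hqbd s hs
          have h1 := abs_le.1 this
          linarith [Real.exp_pos 1]
        have hgint : IntervalIntegrable (fun s => qq s - Real.exp 1) volume a (a+1) :=
          (qq_intInt ha0 (by linarith)).sub intervalIntegrable_const
        have hMpos : 0 ≤ M0 + Real.exp 1 := by
          have := hqbd a ⟨le_rfl, by linarith⟩
          linarith [abs_nonneg (qq a), Real.exp_pos 1, le_trans (abs_nonneg (qq a)) this]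
        have := gron hMpos hgint hgbd hg
        intro s hs
        linarith [this s hs]
      -- lower bound via gron on -qq
      have hlo : ∀ s ∈ Icc a (a+1), 0 ≤ qq s := by
        have hg : ∀ s ∈ Icc a (a+1), (-qq s) ≤ ∫ u in a..s, (-qq u) := by
          intro s hs
          have hs1a : s - 1 ≤ a := by linarith [hs.2]
          have hs1b : 0 ≤ s - 1 := by linarith [le_trans ha1 hs.1]
          have h1 : IntervalIntegrable qq volume (s-1) a := qq_intInt hs1b ha0
          have hpos : 0 ≤ ∫ u in (s-1)..a, qq u := by
            apply intervalIntegral.integral_nonneg hs1a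
            intro x hx
            exact (hIH x (by linarith [hx.1]) hx.2).1
          rw [intervalIntegral.integral_neg]
          have := key s hs
          linarith
        have hgbd : ∀ s ∈ Icc a (a+1), -qq s ≤ M0 := by
          intro s hs
          have h1 := abs_le.1 (hqbd s hs)
          linarith
        have hgint : IntervalIntegrable (fun s => -qq s) volume a (a+1) :=
          (qq_intInt ha0 (by linarith)).neg
        have hMpos : 0 ≤ M0 :=
          le_trans (abs_nonneg (qq a)) (hqbd a ⟨le_rfl, by linarith⟩)
        have := gron hMpos hgint hgbd hg
        intro s hs
        linarith [this s hs]
      have hta : t ∈ Icc a (a+1) := ⟨h, ht1'⟩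
      exact ⟨hlo t hta, hup t hta⟩

lemma qq_bounds (t : ℝ) (ht : 0 ≤ t) : 0 ≤ qq t ∧ qq t ≤ Real.exp 1 :=
  qq_bounds_aux ⌊t⌋₊ t ht (Nat.lt_floor_add_one t).le
-- forced integrability for any solution of the integral equation
lemma force (q' : ℝ → ℝ) (C : ℝ)
    (h0 : ∀ t, 0 ≤ t → 0 ≤ q' t) (hC : ∀ t, 0 ≤ t → q' t ≤ C)
    (heq : ∀ t, 1 ≤ t → q' t = ∫ u in (t-1)..t, q' u)
    (a : ℝ) (ha : 1 ≤ a) (hint : IntervalIntegrable q' volume 0 a) :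
    IntervalIntegrable q' volume a (a+1) := by
  have ha0 : (0:ℝ) ≤ a := by linarith
  set T : Set ℝ := {t : ℝ | t ∈ Ioc a (a+1) ∧ ¬ IntegrableOn q' (Ioc a t) volume} with hT
  rcases eq_empty_or_nonempty T with hemp | hne
  · -- T empty: a+1 not in T, so integrable
    rw [intervalIntegrable_iff_integrableOn_Ioc_of_le (by linarith)]
    by_contra hno
    have : (a+1) ∈ T := ⟨⟨by linarith, le_rfl⟩, hno⟩
    rw [hemp] at this
    exact this
  · set u := sInf T with hu
    have hbdd : BddBelow T := ⟨a, fun x hx => (hx.1.1).le⟩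
    have hua : a ≤ u := le_csInf hne fun x hx => (hx.1.1).le
    have hub : u ≤ a+1 := by
      obtain ⟨x, hx⟩ := hne
      exact le_trans (csInf_le hbdd hx) hx.1.2
    -- T is an upper set within Ioc a (a+1)
    have hupper : ∀ t1 ∈ T, ∀ t2 ∈ Ioc a (a+1), t1 ≤ t2 → t2 ∈ T := by
      intro t1 ht1 t2 ht2 h12
      refine ⟨ht2, fun hI => ht1.2 (hI.mono_set (Ioc_subset_Ioc le_rfl h12))⟩
    -- every point of (u, a+1] is in T, hence q' vanishes there
    have hzero : ∀ t ∈ Ioc u (a+1), q' t = 0 := by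
      intro t ht
      obtain ⟨t1, ht1T, ht1lt⟩ := exists_lt_of_csInf_lt hne ht.1
      have htT : t ∈ T := hupper t1 ht1T t ⟨lt_of_le_of_lt hua ht.1, ht.2⟩ ht1lt.le
      have ht1' : (1:ℝ) ≤ t := by linarith [ht.1]
      have hnint : ¬ IntervalIntegrable q' volume (t-1) t := by
        intro hI
        apply htT.2
        have := (intervalIntegrable_iff_integrableOn_Ioc_of_le (by linarith : t-1 ≤ t)).1 hI
        exact this.mono_set (Ioc_subset_Ioc (by linarith [ht.2]) le_rfl)
      rw [heq t ht1', intervalIntegral.integral_undef hnint]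
    -- integrability on Ioo a u
    have hIoo : IntegrableOn q' (Ioo a u) volume := by
      rcases eq_or_lt_of_le hua with h | h
      · rw [← h]; simp
      · -- a < u
        set s : ℕ → ℝ := fun k => u - (u - a)/(k+2) with hs
        have hsprop : ∀ k : ℕ, a ≤ s k ∧ s k < u := by
          intro k
          have hk2 : (0:ℝ) < (k:ℝ)+2 := by positivity
          have hua' : (0:ℝ) < u - a := by linarith
          constructor
          · have : (u - a)/((k:ℝ)+2) ≤ (u-a)/2 := by
              apply div_le_div_of_nonneg_left (by linarith) (by norm_num)
              · linarith [Nat.cast_nonneg (α := ℝ) k]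
            have h2 : (u-a)/2 < u - a := by linarith
            simp only [hs]
            push_cast
            linarith
          · simp only [hs]
            push_cast
            have : (0:ℝ) < (u - a)/((k:ℝ)+2) := by positivity
            linarith
        have hsint : ∀ k : ℕ, IntegrableOn q' (Ioc a (s k)) volume := by
          intro k
          by_contra hno
          have : s k ∈ T := ⟨⟨lt_of_le_of_ne (hsprop k).1 ?_, by linarith [(hsprop k).2]⟩, hno⟩
          · have := csInf_le hbdd this
            linarith [(hsprop k).2]
          · -- a ≠ s k : if a = s k then Ioc a (s k) is empty, integrable
            intro heqa
            apply hno
            rw [← heqa]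
            simp
        have hunion : Ioo a u = ⋃ k : ℕ, Ioc a (s k) := by
          ext x
          simp only [mem_Ioo, mem_iUnion, mem_Ioc]
          constructor
          · rintro ⟨hx1, hx2⟩
            obtain ⟨m, hm⟩ := exists_nat_ge ((u - a)/(u - x))
            refine ⟨m, hx1, ?_⟩
            have hux : (0:ℝ) < u - x := by linarith
            have hm2 : (u - a)/(u - x) ≤ (m:ℝ) + 2 := by linarith [Nat.cast_nonneg (α := ℝ) m]
            have : (u - a) ≤ ((m:ℝ)+2) * (u - x) := by
              rw [div_le_iff₀ hux] at hm2; linarith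
            have hm2' : (0:ℝ) < (m:ℝ)+2 := by positivity
            simp only [hs]
            have hgoal : (u - a)/((m:ℝ)+2) ≤ u - x := by
              rw [div_le_iff₀ hm2']
              nlinarith
            push_cast
            linarith
          · rintro ⟨k, hk1, hk2⟩
            exact ⟨hk1, lt_of_le_of_lt hk2 (hsprop k).2⟩
        rw [hunion]
        -- measurability on the union + boundedness
        have hmeas : AEStronglyMeasurable q' (volume.restrict (⋃ k : ℕ, Ioc a (s k))) :=
          (aestronglyMeasurable_iUnion_iff).2 fun k => (hsint k).aestronglyMeasurable
        apply Integrable.mono' (g := fun _ => max C 0)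
        · exact integrableOn_const (by
            rw [← hunion]
            exact (lt_of_le_of_lt (measure_mono Ioo_subset_Icc_self) (by simp [Real.volume_Icc])).ne)
        · exact hmeas
        · rw [ae_restrict_iff' (MeasurableSet.iUnion fun k => measurableSet_Ioc)]
          apply Eventually.of_forall
          intro x hx
          rw [← hunion] at hx
          have hx0 : 0 ≤ x := by linarith [hx.1]
          rw [Real.norm_eq_abs, abs_of_nonneg (h0 x hx0)]
          exact le_max_of_le_left (hC x hx0)
    -- assemble
    rw [intervalIntegrable_iff_integrableOn_Ioc_of_le (by linarith)]
    have hsub : Ioc a (a+1) ⊆ (Ioo a u ∪ ({u} ∪ Ioc u (a+1))) := by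
      intro x hx
      rcases lt_trichotomy x u with h | h | h
      · exact Or.inl ⟨hx.1, h⟩
      · exact Or.inr (Or.inl (by simp [h]))
      · exact Or.inr (Or.inr ⟨h, hx.2⟩)
    apply IntegrableOn.mono_set _ hsub
    apply hIoo.union
    apply IntegrableOn.union
    · -- singleton: measure zero
      have : volume ({u} : Set ℝ) = 0 := measure_singleton u
      rw [IntegrableOn, Measure.restrict_eq_zero.2 this]
      exact integrable_zero_measure
    · -- q' = 0 there
      have : IntegrableOn (fun _ : ℝ => (0:ℝ)) (Ioc u (a+1)) volume := integrableOn_const (by simp [Real.volume_Ioc])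
      exact this.congr_fun (fun x hx => (hzero x hx).symm) measurableSet_Ioc
lemma uniq (q' : ℝ → ℝ) (C : ℝ)
    (h0 : ∀ t, 0 ≤ t → 0 ≤ q' t) (hC : ∀ t, 0 ≤ t → q' t ≤ C)
    (hexp : ∀ t, 0 ≤ t → t < 1 → q' t = Real.exp t)
    (heq : ∀ t, 1 ≤ t → q' t = ∫ u in (t-1)..t, q' u) :
    ∀ n : ℕ, IntervalIntegrable q' volume 0 ((n:ℝ)+1)
      ∧ ∀ t, 0 ≤ t → t ≤ (n:ℝ)+1 → q' t = qq t := by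
  intro n
  induction n with
  | zero =>
    simp only [Nat.cast_zero, zero_add]
    have hae : ∀ᵐ x ∂(volume : Measure ℝ), x ∈ Set.uIoc (0:ℝ) 1 → q' x = Real.exp x := by
      rw [ae_iff]
      apply measure_mono_null _ (measure_singleton (1:ℝ))
      intro x hx
      simp only [mem_setOf_eq, _root_.not_imp] at hx
      rcases hx with ⟨hx1, hx2⟩
      rw [uIoc_of_le (by norm_num : (0:ℝ) ≤ 1)] at hx1
      by_contra hne
      have hxlt : x < 1 := lt_of_le_of_ne hx1.2 (by simpa using hne)
      exact hx2 (hexp x hx1.1.le hxlt)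
    have int01 : IntervalIntegrable q' volume 0 1 := by
      rw [intervalIntegrable_iff_integrableOn_Ioc_of_le (by norm_num : (0:ℝ) ≤ 1)]
      have hexpint : IntegrableOn (fun x => Real.exp x) (Ioc (0:ℝ) 1) volume :=
        Real.continuous_exp.integrableOn_Ioc
      apply hexpint.congr_fun_ae
      rw [EventuallyEq, ae_restrict_iff' measurableSet_Ioc]
      rw [uIoc_of_le (by norm_num : (0:ℝ) ≤ 1)] at hae
      filter_upwards [hae] with x hx hx2
      exact (hx hx2).symm
    have heq1 : q' 1 = qq 1 := by
      have h1 := heq 1 le_rfl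
      have h2 := qq_inteq (le_refl (1:ℝ))
      have e1 : (∫ u in (1-1 : ℝ)..1, q' u) = ∫ u in (1-1 : ℝ)..1, Real.exp u := by
        apply intervalIntegral.integral_congr_ae
        norm_num
        convert hae using 2
        norm_num
      have e2 : (∫ u in (1-1 : ℝ)..1, qq u) = ∫ u in (1-1 : ℝ)..1, Real.exp u := by
        apply intervalIntegral.integral_congr_ae
        rw [ae_iff]
        apply measure_mono_null _ (measure_singleton (1:ℝ))
        intro x hx
        simp only [mem_setOf_eq, _root_.not_imp] at hx
        rcases hx with ⟨hx1, hx2⟩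
        rw [show (1:ℝ)-1 = 0 by norm_num, uIoc_of_le (by norm_num : (0:ℝ) ≤ 1)] at hx1
        by_contra hne
        have hxlt : x < 1 := lt_of_le_of_ne hx1.2 (by simpa using hne)
        exact hx2 (qq_of_lt_one hxlt)
      rw [h1, h2, e1, e2]
    constructor
    · exact int01
    · intro t ht0 ht1
      rcases lt_or_eq_of_le ht1 with h | h
      · rw [hexp t ht0 h, qq_of_lt_one h]
      · rw [h]; exact heq1
  | succ n ih =>
    obtain ⟨ihInt, ihEq⟩ := ih
    set a : ℝ := (n:ℝ) + 1 with ha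
    have ha1 : (1:ℝ) ≤ a := by rw [ha]; linarith [Nat.cast_nonneg (α := ℝ) n]
    have ha0 : (0:ℝ) ≤ a := by linarith
    have intStep : IntervalIntegrable q' volume a (a+1) :=
      force q' C h0 hC heq a ha1 ihInt
    have combined : IntervalIntegrable q' volume 0 (a+1) := ihInt.trans intStep
    have key : ∀ t ∈ Icc a (a+1), q' t - qq t = ∫ s in a..t, (q' s - qq s) := by
      intro t ht
      have ht1 : (1:ℝ) ≤ t := le_trans ha1 ht.1
      have htm : 0 ≤ t - 1 := by linarith
      have htma : t - 1 ≤ a := by linarith [ht.2]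
      have q'i1 : IntervalIntegrable q' volume (t-1) a := by
        apply ihInt.mono_set
        rw [uIcc_of_le htma, uIcc_of_le ha0]
        exact Icc_subset_Icc htm le_rfl
      have q'i2 : IntervalIntegrable q' volume a t := by
        apply intStep.mono_set
        rw [uIcc_of_le ht.1, uIcc_of_le (by linarith : a ≤ a+1)]
        exact Icc_subset_Icc le_rfl ht.2
      have qqi1 : IntervalIntegrable qq volume (t-1) a := qq_intInt htm ha0
      have qqi2 : IntervalIntegrable qq volume a t := qq_intInt ha0 (by linarith)
      have hsplit1 : (∫ u in (t-1)..a, q' u) + (∫ u in a..t, q' u) = ∫ u in (t-1)..t, q' u :=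
        intervalIntegral.integral_add_adjacent_intervals q'i1 q'i2
      have hsplit2 : (∫ u in (t-1)..a, qq u) + (∫ u in a..t, qq u) = ∫ u in (t-1)..t, qq u :=
        intervalIntegral.integral_add_adjacent_intervals qqi1 qqi2
      have hfirst : (∫ u in (t-1)..a, q' u) = ∫ u in (t-1)..a, qq u := by
        apply intervalIntegral.integral_congr
        intro x hx
        rw [uIcc_of_le htma] at hx
        exact ihEq x (by linarith [hx.1]) hx.2
      have hsub : (∫ s in a..t, (q' s - qq s)) = (∫ s in a..t, q' s) - ∫ s in a..t, qq s :=
        intervalIntegral.integral_sub q'i2 qqi2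
      rw [heq t ht1, qq_inteq ht1, ← hsplit1, ← hsplit2, hfirst, hsub]
      ring
    set M : ℝ := max C 0 + Real.exp 1 with hM
    have hMpos : 0 ≤ M := by
      have := Real.exp_pos 1
      have : (0:ℝ) ≤ max C 0 := le_max_right C 0
      positivity
    have hgint : IntervalIntegrable (fun s => q' s - qq s) volume a (a+1) :=
      intStep.sub (qq_intInt ha0 (by linarith))
    have hup : ∀ t ∈ Icc a (a+1), q' t - qq t ≤ 0 := by
      apply gron hMpos hgint
      · intro t ht
        have ht0 : 0 ≤ t := le_trans ha0 ht.1
        have := (qq_bounds t ht0).1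
        have := hC t ht0
        have : q' t ≤ max C 0 := le_trans (hC t ht0) (le_max_left C 0)
        have := Real.exp_pos 1
        have := (qq_bounds t ht0).1
        rw [hM]
        linarith
      · intro t ht
        rw [key t ht]
    have hdn : ∀ t ∈ Icc a (a+1), -(q' t - qq t) ≤ 0 := by
      apply gron (g := fun s => -(q' s - qq s)) hMpos hgint.neg
      · intro t ht
        have ht0 : 0 ≤ t := le_trans ha0 ht.1
        have h1 := (qq_bounds t ht0).2
        have h2 := h0 t ht0
        rw [hM]
        have : (0:ℝ) ≤ max C 0 := le_max_right C 0
        linarith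
      · intro t ht
        rw [intervalIntegral.integral_neg, ← key t ht]
    constructor
    · have hc : ((n+1 : ℕ):ℝ) + 1 = a + 1 := by rw [ha]; push_cast; ring
      rw [hc]; exact combined
    · intro t ht0 ht1
      have hc : ((n+1 : ℕ):ℝ) + 1 = a + 1 := by rw [ha]; push_cast; ring
      rw [hc] at ht1
      rcases le_total t a with h | h
      · exact ihEq t ht0 h
      · have h1 := hup t ⟨h, ht1⟩
        have h2 := hdn t ⟨h, ht1⟩
        linarith

/-- There exists a unique bounded function `q : [0,∞) → [0,∞)` such that `q t = e^t`
for `0 ≤ t < 1` and `q t = ∫_{t-1}^t q u du` for `t ≥ 1`. -/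
theorem stmt0 :
    ∃ q : ℝ → ℝ,
      ((∀ t, 0 ≤ t → 0 ≤ q t) ∧ (∃ C : ℝ, ∀ t, 0 ≤ t → q t ≤ C) ∧
        (∀ t, 0 ≤ t → t < 1 → q t = Real.exp t) ∧
        (∀ t, 1 ≤ t → q t = ∫ u in (t - 1)..t, q u)) ∧
      (∀ q' : ℝ → ℝ,
        ((∀ t, 0 ≤ t → 0 ≤ q' t) ∧ (∃ C : ℝ, ∀ t, 0 ≤ t → q' t ≤ C) ∧
          (∀ t, 0 ≤ t → t < 1 → q' t = Real.exp t) ∧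
          (∀ t, 1 ≤ t → q' t = ∫ u in (t - 1)..t, q' u)) →
        ∀ t, 0 ≤ t → q' t = q t) := by
  refine ⟨qq, ⟨fun t ht => (qq_bounds t ht).1, ⟨Real.exp 1, fun t ht => (qq_bounds t ht).2⟩,
    fun t _ h => qq_of_lt_one h, fun t ht => qq_inteq ht⟩, ?_⟩
  rintro q' ⟨h0, ⟨C, hC⟩, hexp, heq⟩ t ht
  exact (uniq q' C h0 hC hexp heq ⌊t⌋₊).2 t ht (Nat.lt_floor_add_one t).le
end

section
/- If q : [0,∞) → [0,∞) is bounded, right continuous, satisfies q(t) = e^t for 0 ≤ t < 1 and q(t) = ∫_{t-1}^t q(u) du for t ≥ 1, then 1 ≤ q(t) ≤ e for all t ≥ 0. -/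
open MeasureTheory Set Filter

lemma aux_meas (q : ℝ → ℝ) (hrc : ∀ t, 0 ≤ t → ContinuousWithinAt q (Set.Ici t) t) :
    AEMeasurable q (volume.restrict (Set.Ici (0:ℝ))) := by
  have hmeas : ∀ n : ℕ, Measurable (fun t : ℝ => q ((⌈t * 2 ^ n⌉ : ℝ) / 2 ^ n)) := by
    intro n
    exact (measurable_from_top (f := fun k : ℤ => q ((k : ℝ) / 2 ^ n))).comp
      (Int.measurable_ceil.comp (measurable_id.mul_const _))
  apply aemeasurable_of_tendsto_metrizable_ae atTop (fun n => (hmeas n).aemeasurable)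
  rw [ae_restrict_iff' measurableSet_Ici]
  refine ae_of_all _ fun t ht => ?_
  have h2 : ∀ n : ℕ, (0:ℝ) < 2 ^ n := fun n => by positivity
  have hge : ∀ n : ℕ, t ≤ (⌈t * 2 ^ n⌉ : ℝ) / 2 ^ n := by
    intro n
    rw [le_div_iff₀ (h2 n)]
    exact Int.le_ceil _
  have hle : ∀ n : ℕ, (⌈t * 2 ^ n⌉ : ℝ) / 2 ^ n ≤ t + (1/2) ^ n := by
    intro n
    rw [div_le_iff₀ (h2 n)]
    have := Int.ceil_lt_add_one (t * 2 ^ n)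
    have : (⌈t * 2 ^ n⌉ : ℝ) ≤ t * 2 ^ n + 1 := le_of_lt this
    calc (⌈t * 2 ^ n⌉ : ℝ) ≤ t * 2 ^ n + 1 := this
      _ = (t + (1/2)^n) * 2 ^ n := by
        have : (1/2:ℝ)^n * 2^n = 1 := by
          rw [one_div, inv_pow, inv_mul_cancel₀ (ne_of_gt (h2 n))]
        nlinarith [this]
  have htt : Tendsto (fun n : ℕ => (⌈t * 2 ^ n⌉ : ℝ) / 2 ^ n) atTop (nhds t) := by
    have h0 : Tendsto (fun n : ℕ => t + (1/2:ℝ) ^ n) atTop (nhds (t + 0)) :=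
      tendsto_const_nhds.add (tendsto_pow_atTop_nhds_zero_of_lt_one (by norm_num) (by norm_num))
    rw [add_zero] at h0
    exact tendsto_of_tendsto_of_tendsto_of_le_of_le tendsto_const_nhds h0 hge hle
  have hw : Tendsto (fun n : ℕ => (⌈t * 2 ^ n⌉ : ℝ) / 2 ^ n) atTop (nhdsWithin t (Set.Ici t)) :=
    tendsto_nhdsWithin_of_tendsto_nhds_of_eventually_within _ htt (Eventually.of_forall hge)
  exact ((hrc t ht).tendsto).comp hw

theorem stmt1_aux (q : ℝ → ℝ)
    (hnonneg : ∀ t, 0 ≤ t → 0 ≤ q t)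
    (hbdd : ∃ C : ℝ, ∀ t, 0 ≤ t → q t ≤ C)
    (hrc : ∀ t, 0 ≤ t → ContinuousWithinAt q (Set.Ici t) t)
    (hmeas : AEMeasurable q (volume.restrict (Set.Ici (0:ℝ))))
    (heq1 : ∀ t, 0 ≤ t → t < 1 → q t = Real.exp t)
    (heq2 : ∀ t, 1 ≤ t → q t = ∫ u in (t - 1)..t, q u) :
    ∀ t, 0 ≤ t → 1 ≤ q t ∧ q t ≤ Real.exp 1 := by
  obtain ⟨C₀, hC₀⟩ := hbdd
  set e := Real.exp 1 with he
  set C := max C₀ e with hC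
  have hCe : e ≤ C := le_max_right _ _
  have hqC : ∀ t, 0 ≤ t → q t ≤ C := fun t ht => (hC₀ t ht).trans (le_max_left _ _)
  -- integrability
  have hint : ∀ a b : ℝ, 0 ≤ a → a ≤ b → IntervalIntegrable q volume a b := by
    intro a b ha hab
    rw [intervalIntegrable_iff_integrableOn_Ioc_of_le hab]
    have hsub : Set.Ioc a b ⊆ Set.Ici (0:ℝ) := fun x hx => ha.trans hx.1.le
    have hm : AEMeasurable q (volume.restrict (Set.Ioc a b)) :=
      hmeas.mono_measure (Measure.restrict_mono hsub le_rfl)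
    refine Integrable.mono' (g := fun _ => C) ((integrableOn_const_iff).mpr (Or.inr measure_Ioc_lt_top))
      hm.aestronglyMeasurable ?_
    rw [ae_restrict_iff' measurableSet_Ioc]
    refine ae_of_all _ fun x hx => ?_
    have hx0 : (0:ℝ) ≤ x := ha.trans hx.1.le
    rw [Real.norm_eq_abs, abs_of_nonneg (hnonneg x hx0)]
    exact hqC x hx0
  have he1 : (1:ℝ) ≤ e := by rw [he]; nlinarith [Real.exp_one_gt_d9]
  -- key estimate for integrals against pointwise bounds
  have hub : ∀ a b M : ℝ, 0 ≤ a → a ≤ b → (∀ x ∈ Set.Icc a b, q x ≤ M) →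
      (∫ u in a..b, q u) ≤ M * (b - a) := by
    intro a b M ha hab hM
    calc (∫ u in a..b, q u) ≤ ∫ _ in a..b, M :=
          intervalIntegral.integral_mono_on hab (hint a b ha hab) intervalIntegrable_const hM
      _ = M * (b - a) := by rw [intervalIntegral.integral_const, smul_eq_mul, mul_comm]
  have hlb : ∀ a b m : ℝ, 0 ≤ a → a ≤ b → (∀ x ∈ Set.Icc a b, m ≤ q x) →
      m * (b - a) ≤ ∫ u in a..b, q u := by
    intro a b m ha hab hm
    calc m * (b - a) = ∫ _ in a..b, m := by rw [intervalIntegral.integral_const, smul_eq_mul, mul_comm]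
      _ ≤ ∫ u in a..b, q u :=
          intervalIntegral.integral_mono_on hab intervalIntegrable_const (hint a b ha hab) hm
  -- base: bounds on [0,1]
  have base : ∀ t, 0 ≤ t → t ≤ 1 → 1 ≤ q t ∧ q t ≤ e := by
    intro t ht ht1
    rcases lt_or_eq_of_le ht1 with h | h
    · rw [heq1 t ht h]
      constructor
      · calc (1:ℝ) = Real.exp 0 := Real.exp_zero.symm
          _ ≤ Real.exp t := Real.exp_le_exp.mpr ht
      · exact Real.exp_le_exp.mpr ht1
    · subst h
      have : q 1 = ∫ u in (0:ℝ)..1, q u := by simpa using heq2 1 le_rfl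
      rw [this]
      have hq_exp : (∫ u in (0:ℝ)..1, q u) = ∫ u in (0:ℝ)..1, Real.exp u := by
        apply intervalIntegral.integral_congr_ae
        have : ∀ᵐ x : ℝ, x ≠ 1 → x ∈ Set.uIoc (0:ℝ) 1 → q x = Real.exp x := by
          refine ae_of_all _ fun x hx hx' => ?_
          rw [Set.uIoc_of_le (by norm_num : (0:ℝ) ≤ 1)] at hx'
          exact heq1 x hx'.1.le (lt_of_le_of_ne hx'.2 hx)
        have hne : ∀ᵐ x : ℝ, x ≠ 1 := by
          rw [ae_iff]
          simpa using Real.volume_singleton (x := 1)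
        filter_upwards [this, hne] with x h1 h2 hx
        exact h1 h2 hx
      rw [hq_exp, integral_exp]
      constructor
      · nlinarith [Real.exp_one_gt_d9, Real.exp_zero]
      · nlinarith [Real.exp_one_gt_d9, Real.exp_zero]
  -- outer induction
  have key : ∀ n : ℕ, ∀ t, 0 ≤ t → t ≤ 1 + n * (1/2 : ℝ) → 1 ≤ q t ∧ q t ≤ e := by
    intro n
    induction n with
    | zero => intro t ht ht1; exact base t ht (by simpa using ht1)
    | succ n ih =>
      set T : ℝ := 1 + n * (1/2 : ℝ) with hTdef
      clear_value T
      have hT1 : (1:ℝ) ≤ T := by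
        have hn0 : (0:ℝ) ≤ (n:ℝ) := Nat.cast_nonneg n
        rw [hTdef]; linarith
      intro t ht0 htu
      have htu' : t ≤ T + 1/2 := by rw [hTdef]; push_cast at htu ⊢; linarith
      rcases le_or_gt t T with h | h
      · exact ih t ht0 h
      -- inner induction
      have inner : ∀ m : ℕ, ∀ s, T ≤ s → s ≤ T + 1/2 →
          1 - (1/2:ℝ)^m ≤ q s ∧ q s ≤ e + (C - e) * (1/2)^m := by
        intro m
        induction m with
        | zero =>
          intro s hs hs'
          have hs0 : (0:ℝ) ≤ s := by linarith
          constructor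
          · simpa using hnonneg s hs0
          · simpa using hqC s hs0
        | succ m ihm =>
          intro s hs hs'
          have hs1 : (1:ℝ) ≤ s := le_trans hT1 hs
          have hs10 : (0:ℝ) ≤ s - 1 := by linarith
          have hs1T : s - 1 ≤ T := by linarith
          have hT0 : (0:ℝ) ≤ T := by linarith
          have hsplit : (∫ u in (s-1)..s, q u) =
              (∫ u in (s-1)..T, q u) + ∫ u in T..s, q u :=
            (intervalIntegral.integral_add_adjacent_intervals
              (hint _ _ hs10 hs1T) (hint _ _ hT0 hs)).symm
          have hqs : q s = (∫ u in (s-1)..T, q u) + ∫ u in T..s, q u := by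
            rw [heq2 s hs1, hsplit]
          have hpm : (0:ℝ) ≤ (1/2:ℝ)^m := by positivity
          have hpm1 : (1/2:ℝ)^m ≤ 1 := pow_le_one₀ (by norm_num) (by norm_num)
          constructor
          · have hI1 : 1 * (T - (s-1)) ≤ ∫ u in (s-1)..T, q u :=
              hlb (s-1) T 1 hs10 hs1T (fun x hx => (ih x (le_trans hs10 hx.1) hx.2).1)
            have hI2 : (1 - (1/2:ℝ)^m) * (s - T) ≤ ∫ u in T..s, q u :=
              hlb T s _ hT0 hs (fun x hx =>
                (ihm x hx.1 (le_trans hx.2 hs')).1)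
            have hkey : (1/2:ℝ)^m * (s-T) ≤ (1/2:ℝ)^m * (1/2) :=
              mul_le_mul_of_nonneg_left (by linarith) hpm
            rw [hqs, pow_succ]
            nlinarith [hI1, hI2, hkey, hpm]
          · have hI1 : (∫ u in (s-1)..T, q u) ≤ e * (T - (s-1)) :=
              hub (s-1) T e hs10 hs1T (fun x hx => (ih x (le_trans hs10 hx.1) hx.2).2)
            have hI2 : (∫ u in T..s, q u) ≤ (e + (C - e) * (1/2:ℝ)^m) * (s - T) :=
              hub T s _ hT0 hs (fun x hx =>
                (ihm x hx.1 (le_trans hx.2 hs')).2)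
            have hkey : (C - e) * (1/2:ℝ)^m * (s-T) ≤ (C - e) * (1/2:ℝ)^m * (1/2) :=
              mul_le_mul_of_nonneg_left (by linarith) (mul_nonneg (by linarith) hpm)
            rw [hqs, pow_succ]
            nlinarith [hI1, hI2, hkey, hpm]
      have h1 : Tendsto (fun m : ℕ => 1 - (1/2:ℝ)^m) atTop (nhds 1) := by
        have := tendsto_pow_atTop_nhds_zero_of_lt_one (by norm_num : (0:ℝ) ≤ 1/2) (by norm_num)
        simpa using tendsto_const_nhds.sub this
      have h2 : Tendsto (fun m : ℕ => e + (C - e) * (1/2:ℝ)^m) atTop (nhds e) := by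
        have := tendsto_pow_atTop_nhds_zero_of_lt_one (by norm_num : (0:ℝ) ≤ 1/2) (by norm_num)
        simpa using tendsto_const_nhds.add (tendsto_const_nhds.mul this)
      constructor
      · exact le_of_tendsto h1 (Eventually.of_forall fun m => (inner m t h.le htu').1)
      · exact ge_of_tendsto h2 (Eventually.of_forall fun m => (inner m t h.le htu').2)
  intro t ht
  have hn : t ≤ 1 + (⌈2*t⌉₊ : ℝ) * (1/2) := by
    have := Nat.le_ceil (2*t)
    push_cast at this ⊢
    linarith
  exact key ⌈2*t⌉₊ t ht hn

/-- If `q : [0,∞) → [0,∞)` is bounded, right continuous, satisfies `q t = e^t` on `[0,1)`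
and `q t = ∫_{t-1}^t q u du` for `t ≥ 1`, then `1 ≤ q t ≤ e` for all `t ≥ 0`. -/
theorem stmt1 (q : ℝ → ℝ)
    (hnonneg : ∀ t, 0 ≤ t → 0 ≤ q t)
    (hbdd : ∃ C : ℝ, ∀ t, 0 ≤ t → q t ≤ C)
    (hrc : ∀ t, 0 ≤ t → ContinuousWithinAt q (Set.Ici t) t)
    (heq1 : ∀ t, 0 ≤ t → t < 1 → q t = Real.exp t)
    (heq2 : ∀ t, 1 ≤ t → q t = ∫ u in (t - 1)..t, q u) :
    ∀ t, 0 ≤ t → 1 ≤ q t ∧ q t ≤ Real.exp 1 :=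
  stmt1_aux q hnonneg hbdd hrc (aux_meas q hrc) heq1 heq2
end

section
/- The unique bounded solution q of the renewal-type equation satisfies lim_{t→∞} q(t) = 2. -/
open MeasureTheory Set Filter intervalIntegral

lemma aux_integrable (q : ℝ → ℝ) (C : ℝ)
    (hnonneg : ∀ t, 0 ≤ t → 0 ≤ q t)
    (hC : ∀ t, 0 ≤ t → q t ≤ C)
    (heq1 : ∀ t, 0 ≤ t → t < 1 → q t = Real.exp t)
    (heq2 : ∀ t, 1 ≤ t → q t = ∫ u in (t - 1)..t, q u) :
    ∀ s : ℝ, IntegrableOn q (Icc 0 s) := by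
  have hbase : IntegrableOn q (Icc 0 1) := by
    have h1 : IntegrableOn q (Ico 0 1) := by
      refine ((Real.continuous_exp.integrableOn_Icc (a:=(0:ℝ)) (b:=1)).mono_set Ico_subset_Icc_self).congr_fun
        (fun x hx => (heq1 x hx.1 hx.2).symm) measurableSet_Ico
    exact (integrableOn_Icc_iff_integrableOn_Ico).2 h1
  intro s
  by_contra hbad
  set bad := {s : ℝ | ¬ IntegrableOn q (Icc 0 s)} with hbadset
  have hne : bad.Nonempty := ⟨s, hbad⟩
  have hle1 : ∀ x ∈ bad, (1:ℝ) ≤ x := by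
    intro x hx
    by_contra h
    push_neg at h
    exact hx (hbase.mono_set (Icc_subset_Icc le_rfl h.le))
  have hbddb : BddBelow bad := ⟨1, hle1⟩
  set T := sInf bad with hT
  have hT1 : (1:ℝ) ≤ T := le_csInf hne hle1
  have hbelow : ∀ s' < T, IntegrableOn q (Icc 0 s') := by
    intro s' hs'
    by_contra h
    exact absurd (csInf_le hbddb h) (not_le.2 hs')
  have hup : ∀ t, T < t → t ∈ bad := by
    intro t ht
    obtain ⟨a, ha, hat⟩ := exists_lt_of_csInf_lt hne ht
    exact fun h => ha (h.mono_set (Icc_subset_Icc le_rfl hat.le))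
  -- integrability on Icc 0 T
  have hIcoT : Ico (0:ℝ) T = ⋃ n : ℕ, Icc 0 (T - 1/(n+1)) := by
    ext x
    simp only [mem_Ico, mem_iUnion, mem_Icc]
    constructor
    · rintro ⟨hx0, hxT⟩
      obtain ⟨n, hn⟩ := exists_nat_one_div_lt (sub_pos.2 hxT)
      exact ⟨n, hx0, by linarith⟩
    · rintro ⟨n, hx0, hxn⟩
      have : (0:ℝ) < 1/(n+1) := by positivity
      exact ⟨hx0, by linarith⟩
  have hmeasT : AEStronglyMeasurable q (volume.restrict (Ico 0 T)) := by
    rw [hIcoT, aestronglyMeasurable_iUnion_iff]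
    intro n
    have : (0:ℝ) < 1/(n+1) := by positivity
    exact (hbelow (T - 1/(n+1)) (by linarith)).aestronglyMeasurable
  have hTInt : IntegrableOn q (Icc 0 T) := by
    have h1 : IntegrableOn q (Ico 0 T) := by
      refine ⟨hmeasT, HasFiniteIntegral.of_bounded (C := max C 0) ?_⟩
      rw [ae_restrict_iff' measurableSet_Ico]
      refine ae_of_all _ fun x hx => ?_
      rw [Real.norm_eq_abs, abs_of_nonneg (hnonneg x hx.1)]
      exact le_max_of_le_left (hC x hx.1)
    exact (integrableOn_Icc_iff_integrableOn_Ico).2 h1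
  -- q vanishes on (T, T+1)
  have hq0 : ∀ t ∈ Ioo T (T+1), q t = 0 := by
    intro t ht
    have hni : ¬ IntervalIntegrable q volume (t-1) t := by
      intro h
      have h' : IntegrableOn q (Icc (t-1) t) :=
        (intervalIntegrable_iff_integrableOn_Icc_of_le (by linarith)).1 h
      refine hup t ht.1 ((hTInt.union h').mono_set ?_)
      intro x hx
      rcases le_or_gt x T with hxT | hxT
      · exact Or.inl ⟨hx.1, hxT⟩
      · exact Or.inr ⟨by linarith [ht.2, hx.2], hx.2⟩
    rw [heq2 t (by linarith [ht.1]), intervalIntegral.integral_undef hni]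
  have hZ : IntegrableOn q (Ioo T (T+1)) :=
    integrableOn_zero.congr_fun (fun x hx => (hq0 x hx).symm) measurableSet_Ioo
  have : IntegrableOn q (Icc 0 (T + 1/2)) := by
    refine (hTInt.union hZ).mono_set ?_
    intro x hx
    rcases le_or_gt x T with hxT | hxT
    · exact Or.inl ⟨hx.1, hxT⟩
    · exact Or.inr ⟨hxT, by linarith [hx.2]⟩
  exact hup (T + 1/2) (by linarith) this

lemma aux_key (q : ℝ → ℝ) (C : ℝ)
    (hnonneg : ∀ t, 0 ≤ t → 0 ≤ q t)
    (hC : ∀ t, 0 ≤ t → q t ≤ C)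
    (heq1 : ∀ t, 0 ≤ t → t < 1 → q t = Real.exp t)
    (heq2 : ∀ t, 1 ≤ t → q t = ∫ u in (t - 1)..t, q u)
    (hint : ∀ s : ℝ, IntegrableOn q (Icc 0 s)) :
    ∀ t : ℝ, 1 ≤ t → (∫ u in (t-1)..t, u * q u) = 1 + (t-1) * q t := by
  set K0 : ℝ := max C 0 with hK0def
  have hK0 : ∀ x, 0 ≤ x → ‖q x‖ ≤ K0 := by
    intro x hx
    rw [Real.norm_eq_abs, abs_of_nonneg (hnonneg x hx)]
    exact le_max_of_le_left (hC x hx)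
  have hintu : ∀ s : ℝ, IntegrableOn (fun u => u * q u) (Icc 0 s) := fun s =>
    IntegrableOn.continuousOn_mul continuousOn_id (hint s) isCompact_Icc
  have hii : ∀ a b : ℝ, 0 ≤ a → 0 ≤ b → IntervalIntegrable q volume a b := by
    intro a b ha hb
    refine IntegrableOn.intervalIntegrable ((hint (max a b)).mono_set ?_)
    rw [uIcc_eq_union]
    rintro x (hx | hx)
    · exact ⟨le_trans ha hx.1, le_trans hx.2 (le_max_right a b)⟩
    · exact ⟨le_trans hb hx.1, le_trans hx.2 (le_max_left a b)⟩
  have hiiu : ∀ a b : ℝ, 0 ≤ a → 0 ≤ b → IntervalIntegrable (fun u => u * q u) volume a b := by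
    intro a b ha hb
    refine IntegrableOn.intervalIntegrable ((hintu (max a b)).mono_set ?_)
    rw [uIcc_eq_union]
    rintro x (hx | hx)
    · exact ⟨le_trans ha hx.1, le_trans hx.2 (le_max_right a b)⟩
    · exact ⟨le_trans hb hx.1, le_trans hx.2 (le_max_left a b)⟩
  set B : ℝ → ℝ := fun t => ∫ u in (0:ℝ)..t, q u with hBdef
  set A : ℝ → ℝ := fun t => ∫ u in (0:ℝ)..t, u * q u with hAdef
  have hBsub : ∀ t : ℝ, 1 ≤ t → B t - B (t-1) = ∫ u in (t-1)..t, q u := fun t ht =>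
    integral_interval_sub_left (hii 0 t le_rfl (by linarith)) (hii 0 (t-1) le_rfl (by linarith))
  have hAsub : ∀ t : ℝ, 1 ≤ t → A t - A (t-1) = ∫ u in (t-1)..t, u * q u := fun t ht =>
    integral_interval_sub_left (hiiu 0 t le_rfl (by linarith)) (hiiu 0 (t-1) le_rfl (by linarith))
  have hqB : ∀ t : ℝ, 1 ≤ t → q t = B t - B (t-1) := by
    intro t ht; rw [hBsub t ht]; exact heq2 t ht
  -- continuity of B on Ici 0
  have hBlip : LipschitzOnWith K0.toNNReal B (Ici 0) := by
    refine LipschitzOnWith.of_dist_le_mul ?_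
    intro x hx y hy
    rw [Real.dist_eq, Real.dist_eq]
    have : B x - B y = ∫ u in y..x, q u :=
      integral_interval_sub_left (hii 0 x le_rfl hx) (hii 0 y le_rfl hy)
    rw [← Real.norm_eq_abs (B x - B y), this,
      Real.coe_toNNReal _ (le_max_right C 0)]
    refine norm_integral_le_of_norm_le_const ?_
    intro u hu
    refine hK0 u ?_
    rcases le_total y x with h | h
    · rw [uIoc_of_le h] at hu; exact le_trans hy hu.1.le
    · rw [uIoc_of_ge h] at hu; exact le_trans hx hu.1.le
  have hBcont : ContinuousOn B (Ici 0) := hBlip.continuousOn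
  -- continuity of q within Ici t at t, for t ≥ 0
  have hcw : ∀ t : ℝ, 0 ≤ t → ContinuousWithinAt q (Ici t) t := by
    intro t ht
    rcases lt_or_ge t 1 with ht1 | ht1
    · -- q = exp on a right-neighborhood
      refine ContinuousWithinAt.congr_of_eventuallyEq
        (Real.continuous_exp.continuousAt.continuousWithinAt) ?_ (heq1 t ht ht1)
      have hmem : Ico t 1 ∈ nhdsWithin t (Ici t) := by
        rw [← Ici_inter_Iio]
        exact inter_mem_nhdsWithin _ (Iio_mem_nhds ht1)
      filter_upwards [hmem] with x hx
      exact heq1 x (le_trans ht hx.1) hx.2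
    · -- q t = B t - B (t-1) near t
      have hBB : ContinuousWithinAt (fun s => B s - B (s-1)) (Ici t) t := by
        have h1 : ContinuousWithinAt B (Ici t) t :=
          (hBcont t (mem_Ici.mpr (by linarith))).mono (Ici_subset_Ici.2 (by linarith))
        have h2 : ContinuousWithinAt (fun s => B (s-1)) (Ici t) t := by
          have hc : ContinuousWithinAt B (Ici (t-1)) (t-1) :=
            (hBcont.mono (Ici_subset_Ici.mpr (by linarith : (0:ℝ) ≤ t-1))) (t-1) (mem_Ici.mpr le_rfl)
          exact ContinuousWithinAt.comp (g := B) (f := fun s : ℝ => s - 1)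
            (s := Ici t) (t := Ici (t-1)) (x := t) hc
            ((continuous_id.sub continuous_const).continuousWithinAt)
            (fun x hx => mem_Ici.mpr (show t - 1 ≤ x - 1 by
              have := mem_Ici.mp hx; linarith))
        exact h1.sub h2
      refine hBB.congr_of_eventuallyEq ?_ (hqB t ht1)
      have hmem : Ici t ∈ nhdsWithin t (Ici t) := self_mem_nhdsWithin
      filter_upwards [hmem] with x hx
      exact hqB x (le_trans ht1 hx)
  -- FTC: right derivatives
  have hmeasf : ∀ b : ℝ, 0 ≤ b → StronglyMeasurableAtFilter q (nhdsWithin b (Ioi b)) volume := by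
    intro b hb
    refine ⟨Ioo b (b+1), Ioo_mem_nhdsGT_of_mem ⟨le_rfl, lt_add_one b⟩, ?_⟩
    exact ((hint (b+1)).mono_set (fun x hx => ⟨le_trans hb hx.1.le, hx.2.le⟩)).aestronglyMeasurable
  have hmeasfu : ∀ b : ℝ, 0 ≤ b →
      StronglyMeasurableAtFilter (fun u => u * q u) (nhdsWithin b (Ioi b)) volume := by
    intro b hb
    refine ⟨Ioo b (b+1), Ioo_mem_nhdsGT_of_mem ⟨le_rfl, lt_add_one b⟩, ?_⟩
    exact ((hintu (b+1)).mono_set (fun x hx => ⟨le_trans hb hx.1.le, hx.2.le⟩)).aestronglyMeasurable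
  have hdB : ∀ b : ℝ, 0 ≤ b → HasDerivWithinAt B (q b) (Ici b) b := by
    intro b hb
    exact integral_hasDerivWithinAt_right (hii 0 b le_rfl hb) (hmeasf b hb)
      ((hcw b hb).mono Ioi_subset_Ici_self)
  have hdA : ∀ b : ℝ, 0 ≤ b → HasDerivWithinAt A (b * q b) (Ici b) b := by
    intro b hb
    exact integral_hasDerivWithinAt_right (hiiu 0 b le_rfl hb) (hmeasfu b hb)
      ((continuousWithinAt_id.mul ((hcw b hb).mono Ioi_subset_Ici_self)) : ContinuousWithinAt (fun u => u * q u) (Ioi b) b)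
  intro t ht
  -- P is constant on [1, t]
  set P : ℝ → ℝ := fun s => (A s - A (s-1)) - (s-1) * (B s - B (s-1)) with hPdef
  have hPcont : ContinuousOn P (Icc 1 t) := by
    -- A is continuous on Icc 0 t (Lipschitz with constant t*K0)
    have hAlip : LipschitzOnWith (t * K0).toNNReal A (Icc 0 t) := by
      refine LipschitzOnWith.of_dist_le_mul ?_
      intro x hx y hy
      rw [Real.dist_eq, Real.dist_eq]
      have : A x - A y = ∫ u in y..x, u * q u :=
        integral_interval_sub_left (hiiu 0 x le_rfl hx.1) (hiiu 0 y le_rfl hy.1)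
      rw [← Real.norm_eq_abs (A x - A y), this,
        Real.coe_toNNReal _ (by positivity)]
      refine norm_integral_le_of_norm_le_const ?_
      intro u hu
      have hu' : 0 ≤ u ∧ u ≤ t := by
        rcases le_total y x with h | h
        · rw [uIoc_of_le h] at hu
          exact ⟨le_trans hy.1 hu.1.le, le_trans hu.2 hx.2⟩
        · rw [uIoc_of_ge h] at hu
          exact ⟨le_trans hx.1 hu.1.le, le_trans hu.2 hy.2⟩
      rw [norm_mul]
      refine mul_le_mul ?_ (hK0 u hu'.1) (norm_nonneg _) (by linarith [hu'.1, hu'.2])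
      rw [Real.norm_eq_abs, abs_of_nonneg hu'.1]; exact hu'.2
    have hAcont : ContinuousOn A (Icc 0 t) := hAlip.continuousOn
    have h1 : ContinuousOn (fun s => A s) (Icc 1 t) :=
      hAcont.mono (fun x hx => mem_Icc.mpr
        ⟨le_trans zero_le_one (mem_Icc.mp hx).1, (mem_Icc.mp hx).2⟩)
    have h2 : ContinuousOn (fun s => A (s-1)) (Icc 1 t) := by
      refine hAcont.comp ((continuous_id.sub continuous_const).continuousOn) ?_
      intro x hx
      refine mem_Icc.mpr ⟨show (0:ℝ) ≤ x - 1 by linarith [(mem_Icc.mp hx).1],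
        show x - 1 ≤ t by linarith [(mem_Icc.mp hx).2]⟩
    have h3 : ContinuousOn (fun s => B s) (Icc 1 t) :=
      hBcont.mono (fun x hx => mem_Ici.mpr (le_trans zero_le_one (mem_Icc.mp hx).1))
    have h4 : ContinuousOn (fun s => B (s-1)) (Icc 1 t) := by
      refine hBcont.comp ((continuous_id.sub continuous_const).continuousOn) ?_
      intro x hx
      exact mem_Ici.mpr (show (0:ℝ) ≤ x - 1 by linarith [(mem_Icc.mp hx).1])
    exact (h1.sub h2).sub (((continuous_id.sub continuous_const).continuousOn).mul (h3.sub h4))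
  have hPderiv : ∀ s ∈ Ico 1 t, HasDerivWithinAt P 0 (Ici s) s := by
    intro s hs
    have hs1 : (1:ℝ) ≤ s := hs.1
    have hs0 : (0:ℝ) ≤ s := by linarith
    have hs10 : (0:ℝ) ≤ s - 1 := by linarith
    have hmaps : MapsTo (fun y : ℝ => y - 1) (Ici s) (Ici (s-1)) := by
      intro x hx; simp only [mem_Ici] at *; linarith
    have hsub : HasDerivWithinAt (fun y : ℝ => y - 1) 1 (Ici s) s := by
      simpa using (hasDerivWithinAt_id s (Ici s)).sub_const 1
    have hdB1 : HasDerivWithinAt (fun y => B (y-1)) (q (s-1) * 1) (Ici s) s :=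
      by have h := HasDerivWithinAt.comp s (hdB (s-1) hs10) hsub hmaps; exact h
    have hdA1 : HasDerivWithinAt (fun y => A (y-1)) ((s-1) * q (s-1) * 1) (Ici s) s :=
      by have h := HasDerivWithinAt.comp s (hdA (s-1) hs10) hsub hmaps; exact h
    have hd : HasDerivWithinAt P
        ((s * q s - (s-1) * q (s-1) * 1) -
          (1 * (B s - B (s-1)) + (s-1) * (q s - q (s-1) * 1))) (Ici s) s := by
      exact (((hdA s hs0).sub hdA1).sub
        (hsub.mul ((hdB s hs0).sub hdB1)))
    have heqd : (s * q s - (s-1) * q (s-1) * 1) -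
        (1 * (B s - B (s-1)) + (s-1) * (q s - q (s-1) * 1)) = 0 := by
      rw [← hqB s hs1]; ring
    rwa [heqd] at hd
  have hPconst : P t = P 1 :=
    constant_of_has_deriv_right_zero hPcont hPderiv t ⟨ht, le_rfl⟩
  -- P 1 = 1
  have hP1 : P 1 = 1 := by
    have hA0 : A 0 = 0 := by simp [hAdef]
    have hA1 : A 1 = 1 := by
      have hcongr : A 1 = ∫ u in (0:ℝ)..1, u * Real.exp u := by
        refine integral_congr_ae ?_
        have hne : ∀ᵐ x : ℝ ∂volume, x ∉ ({1} : Set ℝ) :=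
          compl_mem_ae_iff.2 (measure_singleton 1)
        filter_upwards [hne] with x hx hmem
        rw [uIoc_of_le (zero_le_one)] at hmem
        have hx1 : x < 1 := lt_of_le_of_ne hmem.2 (by simpa using hx)
        rw [heq1 x hmem.1.le hx1]
      rw [hcongr]
      have : ∫ u in (0:ℝ)..1, u * Real.exp u = ((1:ℝ)-1) * Real.exp 1 - ((0:ℝ)-1) * Real.exp 0 := by
        refine integral_eq_sub_of_hasDerivAt (f := fun u => (u - 1) * Real.exp u) ?_ ?_
        · intro x _
          have h := ((hasDerivAt_id x).sub_const 1).mul (Real.hasDerivAt_exp x)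
          exact h.congr_deriv (by simp only [id_eq]; ring)
        · exact (continuous_id.mul Real.continuous_exp).intervalIntegrable 0 1
      rw [this]; simp
    simp [hPdef, hA0, hA1]
  -- conclude
  have := hPconst.trans hP1
  rw [hPdef] at this
  simp only [] at this
  rw [hAsub t ht, ← hqB t ht] at this
  linarith [this]


/-- The unique bounded solution `q` of the renewal-type equation satisfies
`lim_{t→∞} q t = 2`. -/
theorem stmt2 (q : ℝ → ℝ)
    (hnonneg : ∀ t, 0 ≤ t → 0 ≤ q t)
    (hbdd : ∃ C : ℝ, ∀ t, 0 ≤ t → q t ≤ C)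
    (heq1 : ∀ t, 0 ≤ t → t < 1 → q t = Real.exp t)
    (heq2 : ∀ t, 1 ≤ t → q t = ∫ u in (t - 1)..t, q u) :
    Filter.Tendsto q Filter.atTop (nhds 2) := by
  obtain ⟨C, hC⟩ := hbdd
  have hint := aux_integrable q C hnonneg hC heq1 heq2
  have hkey := aux_key q C hnonneg hC heq1 heq2 hint
  have hintu : ∀ s : ℝ, IntegrableOn (fun u => u * q u) (Icc 0 s) := fun s =>
    IntegrableOn.continuousOn_mul continuousOn_id (hint s) isCompact_Icc
  have hii : ∀ a b : ℝ, 0 ≤ a → 0 ≤ b → IntervalIntegrable q volume a b := by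
    intro a b ha hb
    refine IntegrableOn.intervalIntegrable ((hint (max a b)).mono_set ?_)
    rw [uIcc_eq_union]
    rintro x (hx | hx)
    · exact ⟨le_trans ha hx.1, le_trans hx.2 (le_max_right a b)⟩
    · exact ⟨le_trans hb hx.1, le_trans hx.2 (le_max_left a b)⟩
  have hiiu : ∀ a b : ℝ, 0 ≤ a → 0 ≤ b → IntervalIntegrable (fun u => u * q u) volume a b := by
    intro a b ha hb
    refine IntegrableOn.intervalIntegrable ((hintu (max a b)).mono_set ?_)
    rw [uIcc_eq_union]
    rintro x (hx | hx)
    · exact ⟨le_trans ha hx.1, le_trans hx.2 (le_max_right a b)⟩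
    · exact ⟨le_trans hb hx.1, le_trans hx.2 (le_max_left a b)⟩
  set K : ℝ := max C 2 with hKdef
  have hK2 : (2:ℝ) ≤ K := le_max_right C 2
  have hKC : C ≤ K := le_max_left C 2
  have hK : ∀ t, 0 ≤ t → |q t - 2| ≤ K := by
    intro t ht
    have h1 := hnonneg t ht
    have h2 := hC t ht
    rw [abs_le]
    constructor <;> linarith
  -- the key identity
  have hident : ∀ t : ℝ, 1 ≤ t →
      q t - 2 = ∫ u in (t-1)..t, (2*t-1-2*u) * (q u - 2) := by
    intro t ht
    have h10 : (0:ℝ) ≤ t - 1 := by linarith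
    have h00 : (0:ℝ) ≤ t := by linarith
    have hpoly : IntervalIntegrable (fun u : ℝ => 4*u - 2*(2*t-1)) volume (t-1) t :=
      ((continuous_const.mul continuous_id).sub continuous_const).intervalIntegrable _ _
    have hf1 : IntervalIntegrable (fun u => (2*t-1) * q u) volume (t-1) t :=
      (hii (t-1) t h10 h00).const_mul _
    have hf2 : IntervalIntegrable (fun u => 2 * (u * q u)) volume (t-1) t :=
      (hiiu (t-1) t h10 h00).const_mul _
    have hcongr : (∫ u in (t-1)..t, (2*t-1-2*u) * (q u - 2))
        = ∫ u in (t-1)..t, ((2*t-1) * q u - 2 * (u * q u) + (4*u - 2*(2*t-1))) := by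
      refine intervalIntegral.integral_congr ?_
      intro u _
      ring
    have hzero : (∫ u in (t-1)..t, (4*u - 2*(2*t-1))) = 0 := by
      have : (∫ u in (t-1)..t, (4*u - 2*(2*t-1)))
          = (2*t^2 - 2*(2*t-1)*t) - (2*(t-1)^2 - 2*(2*t-1)*(t-1)) := by
        refine intervalIntegral.integral_eq_sub_of_hasDerivAt
          (f := fun u => 2*u^2 - 2*(2*t-1)*u) ?_ hpoly
        intro x _
        have h := ((hasDerivAt_pow 2 x).const_mul 2).sub
          ((hasDerivAt_id x).const_mul (2*(2*t-1)))
        convert h using 1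
        · funext y; simp only [Pi.sub_apply, Pi.mul_apply, id_eq]
        · norm_num
          ring
      rw [this]; ring
    rw [hcongr, intervalIntegral.integral_add (hf1.sub hf2) hpoly,
      intervalIntegral.integral_sub hf1 hf2, intervalIntegral.integral_const_mul,
      intervalIntegral.integral_const_mul, ← heq2 t ht, hkey t ht, hzero]
    ring
  -- ∫ |2t-1-2u| du = 1/2
  have habs : ∀ t : ℝ, (∫ u in (t-1)..t, |2*t-1-2*u|) = 1/2 := by
    intro t
    have hcont : Continuous (fun u : ℝ => |2*t-1-2*u|) :=
      (continuous_const.sub (continuous_const.mul continuous_id)).abs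
    have hadd := intervalIntegral.integral_add_adjacent_intervals
      (a := t-1) (b := t-1/2) (c := t) (f := fun u => |2*t-1-2*u|) (μ := volume)
      (hcont.intervalIntegrable _ _) (hcont.intervalIntegrable _ _)
    have hI1 : (∫ u in (t-1)..(t-1/2), |2*t-1-2*u|) = 1/4 := by
      have he : (∫ u in (t-1)..(t-1/2), |2*t-1-2*u|)
          = ∫ u in (t-1)..(t-1/2), (2*t-1-2*u) := by
        refine intervalIntegral.integral_congr ?_
        intro u hu
        rw [uIcc_of_le (by linarith)] at hu
        exact abs_of_nonneg (by linarith [hu.2])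
      rw [he]
      have : (∫ u in (t-1)..(t-1/2), (2*t-1-2*u))
          = ((2*t-1)*(t-1/2) - (t-1/2)^2) - ((2*t-1)*(t-1) - (t-1)^2) := by
        refine intervalIntegral.integral_eq_sub_of_hasDerivAt
          (f := fun u => (2*t-1)*u - u^2) ?_ ?_
        · intro x _
          have h := ((hasDerivAt_id x).const_mul (2*t-1)).sub (hasDerivAt_pow 2 x)
          convert h using 1
          · funext y; simp only [Pi.sub_apply, Pi.mul_apply, id_eq]
          · norm_num
        · exact (continuous_const.sub (continuous_const.mul continuous_id)).intervalIntegrable _ _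
      rw [this]; ring
    have hI2 : (∫ u in (t-1/2)..t, |2*t-1-2*u|) = 1/4 := by
      have he : (∫ u in (t-1/2)..t, |2*t-1-2*u|)
          = ∫ u in (t-1/2)..t, (2*u - (2*t-1)) := by
        refine intervalIntegral.integral_congr ?_
        intro u hu
        rw [uIcc_of_le (by linarith)] at hu
        show |2*t-1-2*u| = 2*u - (2*t-1)
        rw [abs_of_nonpos (by linarith [hu.1])]
        ring
      rw [he]
      have : (∫ u in (t-1/2)..t, (2*u - (2*t-1)))
          = (t^2 - (2*t-1)*t) - ((t-1/2)^2 - (2*t-1)*(t-1/2)) := by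
        refine intervalIntegral.integral_eq_sub_of_hasDerivAt
          (f := fun u => u^2 - (2*t-1)*u) ?_ ?_
        · intro x _
          have h := (hasDerivAt_pow 2 x).sub ((hasDerivAt_id x).const_mul (2*t-1))
          convert h using 1
          · funext y; simp only [Pi.sub_apply, Pi.mul_apply, id_eq]
          · norm_num
        · exact ((continuous_const.mul continuous_id).sub continuous_const).intervalIntegrable _ _
      rw [this]; ring
    rw [← hadd, hI1, hI2]; norm_num
  -- contraction step
  have hcontr : ∀ t : ℝ, 1 ≤ t → ∀ M : ℝ, 0 ≤ M →
      (∀ u, t - 1 ≤ u → |q u - 2| ≤ M) → |q t - 2| ≤ M / 2 := by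
    intro t ht M hM hMb
    rw [hident t ht]
    have hg : IntervalIntegrable (fun u : ℝ => |2*t-1-2*u| * M) volume (t-1) t :=
      (((continuous_const.sub (continuous_const.mul continuous_id)).abs).mul
        continuous_const).intervalIntegrable _ _
    have hb := intervalIntegral.norm_integral_le_abs_of_norm_le
      (f := fun u => (2*t-1-2*u) * (q u - 2)) (g := fun u => |2*t-1-2*u| * M)
      (μ := volume) (a := t-1) (b := t) ?_ hg
    · have hgval : (∫ u in (t-1)..t, |2*t-1-2*u| * M) = M / 2 := by
        rw [intervalIntegral.integral_mul_const, habs t]; ring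
      rw [hgval] at hb
      calc ‖∫ u in (t-1)..t, (2*t-1-2*u) * (q u - 2)‖ ≤ |M / 2| := hb
        _ = M / 2 := abs_of_nonneg (by linarith)
    · refine ae_restrict_iff' measurableSet_uIoc |>.2 (ae_of_all _ fun u hu => ?_)
      rw [uIoc_of_le (by linarith : t - 1 ≤ t)] at hu
      rw [norm_mul, Real.norm_eq_abs, Real.norm_eq_abs]
      exact mul_le_mul_of_nonneg_left (hMb u hu.1.le) (abs_nonneg _)
  -- induction
  have hind : ∀ n : ℕ, ∀ t : ℝ, (n:ℝ) ≤ t → |q t - 2| ≤ K / 2^n := by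
    intro n
    induction n with
    | zero => intro t ht; simpa using hK t (by exact_mod_cast ht)
    | succ n ih =>
      intro t ht
      have hn : (0:ℝ) ≤ (n:ℝ) := Nat.cast_nonneg n
      have ht1 : (1:ℝ) ≤ t := by push_cast at ht; linarith
      have hKn : (0:ℝ) ≤ K / 2^n := by positivity
      have := hcontr t ht1 (K / 2^n) hKn (fun u hu => ih u (by push_cast at ht ⊢; linarith))
      calc |q t - 2| ≤ (K / 2^n) / 2 := this
        _ = K / 2^(n+1) := by rw [pow_succ]; ring
  -- conclusion
  rw [Metric.tendsto_atTop]
  intro ε hε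
  have hK0 : (0:ℝ) < K := by linarith
  obtain ⟨n, hn⟩ := exists_pow_lt_of_lt_one (x := ε / K) (y := (1:ℝ)/2)
    (by positivity) (by norm_num)
  refine ⟨n, fun t ht => ?_⟩
  have h1 : |q t - 2| ≤ K / 2^n := hind n t ht
  have h2 : K / 2^n < ε := by
    have hlt : K * (1/2)^n < K * (ε / K) := mul_lt_mul_of_pos_left hn hK0
    have heqK : K * (ε / K) = ε := by field_simp
    calc K / 2^n = K * (1/2)^n := by rw [div_pow, one_pow]; ring
      _ < ε := heqK ▸ hlt
  rw [Real.dist_eq]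
  linarith
end

section
/- Let 0 < η < 1 and T > 1. Suppose r : [0,T] → ℝ is right continuous, (1−η)e^{(1−η)t} < r(t) < (1+η)e^{(1+η)t} for 0 ≤ t < 1, and (1−η)∫_{t-1}^t r(u) du < r(t) < (1+η)∫_{t-1}^t r(u) du for 1 ≤ t ≤ T. Then sup_{t∈[0,T]} |r(t) − q(t)| ≤ 4η e^{(1+η)T}, where q is the unique bounded solution of the renewal equation. -/
open MeasureTheory Set Filter Topology

private lemma q_int (q : ℝ → ℝ) (C : ℝ)
    (hq0 : ∀ t, 0 ≤ t → 0 ≤ q t)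
    (hqb : ∀ t, 0 ≤ t → q t ≤ C)
    (hq1 : ∀ t, 0 ≤ t → t < 1 → q t = Real.exp t)
    (hq2 : ∀ t, 1 ≤ t → q t = ∫ u in (t - 1)..t, q u) :
    ∀ b : ℝ, IntegrableOn q (Icc 0 b) := by
  have hM : ∀ x : ℝ, 0 ≤ x → ‖q x‖ ≤ max C 0 := fun x hx => by
    rw [Real.norm_eq_abs, abs_of_nonneg (hq0 x hx)]
    exact le_max_of_le_left (hqb x hx)
  set G : Set ℝ := {b | 1 ≤ b ∧ IntegrableOn q (Icc 0 b)} with hGdef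
  have h1G : (1:ℝ) ∈ G := by
    refine ⟨le_refl 1, ?_⟩
    have hne : ∀ᵐ (x:ℝ) ∂(volume.restrict (Icc (0:ℝ) 1)), x ≠ 1 :=
      ae_restrict_of_ae (compl_mem_ae_iff.2 (measure_singleton 1))
    have heq : q =ᵐ[volume.restrict (Icc (0:ℝ) 1)] Real.exp := by
      filter_upwards [hne, ae_restrict_mem measurableSet_Icc] with x hx hmem
      exact hq1 x hmem.1 (lt_of_le_of_ne hmem.2 hx)
    exact (integrableOn_congr_fun_ae heq).2 Real.continuous_exp.integrableOn_Icc
  have hdc : ∀ a b : ℝ, a ∈ G → 1 ≤ b → b ≤ a → b ∈ G := fun a b ha h1 h2 =>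
    ⟨h1, ha.2.mono_set (Icc_subset_Icc le_rfl h2)⟩
  suffices hforall : ∀ b : ℝ, 1 ≤ b → IntegrableOn q (Icc 0 b) by
    intro b
    exact (hforall (max b 1) (le_max_right _ _)).mono_set
      (Icc_subset_Icc le_rfl (le_max_left _ _))
  by_contra hcon
  push_neg at hcon
  obtain ⟨b₀, hb₀1, hb₀⟩ := hcon
  have hbdd : BddAbove G := by
    refine ⟨b₀, fun x hx => ?_⟩
    by_contra hc
    push_neg at hc
    exact hb₀ (hdc x b₀ hx hb₀1 hc.le).2
  set t₀ := sSup G with ht₀def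
  have ht₀1 : 1 ≤ t₀ := le_csSup hbdd h1G
  have hGlt : ∀ s : ℝ, 1 ≤ s → s < t₀ → s ∈ G := by
    intro s h1 h2
    obtain ⟨a, haG, has⟩ := exists_lt_of_lt_csSup ⟨1, h1G⟩ h2
    exact hdc a s haG h1 has.le
  -- integrability on Ico 0 t₀
  have hIco : IntegrableOn q (Ico 0 t₀) := by
    set u : ℕ → ℝ := fun n => max 1 (t₀ - 1/(n+1)) with hudef
    have huG : ∀ n, u n ∈ G := by
      intro n
      rcases le_or_gt (t₀ - 1/(n+1)) 1 with h | h
      · have hu : u n = 1 := max_eq_left h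
        rw [hu]; exact h1G
      · have hu : u n = t₀ - 1/(n+1) := max_eq_right h.le
        rw [hu]
        have hpos : (0:ℝ) < 1/(n+1) := by positivity
        exact hGlt _ h.le (by linarith)
    have hsub : Ico (0:ℝ) t₀ ⊆ ⋃ n, Icc (0:ℝ) (u n) := by
      intro x hx
      obtain ⟨n, hn⟩ := exists_nat_one_div_lt (by linarith [hx.2] : (0:ℝ) < t₀ - x)
      refine mem_iUnion.2 ⟨n, hx.1, ?_⟩
      have : (1:ℝ)/(n+1) < t₀ - x := by exact_mod_cast hn
      have : x ≤ t₀ - 1/(n+1) := by linarith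
      exact this.trans (le_max_right _ _)
    have hAESM : AEStronglyMeasurable q (volume.restrict (Ico 0 t₀)) := by
      have h1 : AEStronglyMeasurable q (volume.restrict (⋃ n, Icc (0:ℝ) (u n))) :=
        aestronglyMeasurable_iUnion_iff.2 fun n => ((huG n).2).aestronglyMeasurable
      exact h1.mono_measure (Measure.restrict_mono hsub le_rfl)
    refine ⟨hAESM, ?_⟩
    refine HasFiniteIntegral.restrict_of_bounded (C := max C 0) measure_Ico_lt_top ?_
    filter_upwards [ae_restrict_mem measurableSet_Ico] with x hx
    exact hM x hx.1
  have ht₀G : IntegrableOn q (Icc 0 t₀) := (integrableOn_Icc_iff_integrableOn_Ico enorm_ne_top).2 hIco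
  -- all values beyond t₀ are zero
  have hzero : ∀ v : ℝ, t₀ < v → v ≤ t₀ + 1 → q v = 0 := by
    intro v hv1 hv2
    have hv1' : (1:ℝ) ≤ v := le_trans ht₀1 hv1.le
    by_contra hne
    have hint : IntervalIntegrable q volume (v-1) v := by
      by_contra h
      rw [hq2 v hv1', intervalIntegral.integral_undef h] at hne
      exact hne rfl
    have hIv : IntegrableOn q (Icc 0 v) := by
      have h1 : IntegrableOn q (Ioc (v-1) v) :=
        (intervalIntegrable_iff_integrableOn_Ioc_of_le (by linarith)).1 hint
      refine (ht₀G.union h1).mono_set ?_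
      intro x hx
      rcases le_or_gt x t₀ with h | h
      · exact Or.inl ⟨hx.1, h⟩
      · exact Or.inr ⟨by linarith, hx.2⟩
    have : v ∈ G := ⟨hv1', hIv⟩
    have := le_csSup hbdd this
    linarith
  have hfinal : IntegrableOn q (Icc 0 (t₀+1)) := by
    have hind : Integrable (indicator (Icc 0 t₀) q) volume :=
      ht₀G.integrable_indicator measurableSet_Icc
    refine (integrableOn_congr_fun_ae ?_).2 hind.integrableOn
    filter_upwards [ae_restrict_mem measurableSet_Icc] with x hx
    rcases le_or_gt x t₀ with h | h
    · rw [Set.indicator_of_mem (show x ∈ Icc (0:ℝ) t₀ from ⟨hx.1, h⟩) q]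
    · rw [Set.indicator_of_notMem
        (show x ∉ Icc (0:ℝ) t₀ from fun hmem => absurd hmem.2 (not_le.2 h)) q,
        hzero x h hx.2]
  have : t₀ + 1 ∈ G := ⟨by linarith, hfinal⟩
  have := le_csSup hbdd this
  linarith


private lemma q_cont (q : ℝ → ℝ)
    (hq2 : ∀ t, 1 ≤ t → q t = ∫ u in (t - 1)..t, q u)
    (hint : ∀ b : ℝ, IntegrableOn q (Icc 0 b)) :
    ContinuousOn q (Ici 1) := by
  set q' : ℝ → ℝ := fun u => if u < 0 then 0 else q u with hq'def
  have hq'int : ∀ a b : ℝ, IntervalIntegrable q' volume a b := by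
    have key : ∀ a b : ℝ, a ≤ b → IntervalIntegrable q' volume a b := by
      intro a b hab
      rw [intervalIntegrable_iff_integrableOn_Ioc_of_le hab]
      have h1 : IntegrableOn q' (Ioc a b ∩ Iio 0) := by
        refine (integrableOn_zero (ε' := ℝ)).congr_fun ?_
          (measurableSet_Ioc.inter measurableSet_Iio)
        intro x hx
        simp only [hq'def, Pi.zero_apply]
        rw [if_pos (show x < 0 from hx.2)]
      have h2 : IntegrableOn q' (Ioc a b ∩ Ici 0) := by
        refine ((hint b).mono_set ?_).congr_fun ?_
          (measurableSet_Ioc.inter measurableSet_Ici)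
        · exact fun x hx => ⟨hx.2, hx.1.2⟩
        · intro x hx
          simp [hq'def, not_lt.2 (show (0:ℝ) ≤ x from hx.2)]
      refine (h1.union h2).mono_set ?_
      intro x hx
      rcases lt_or_ge x 0 with h | h
      · exact Or.inl ⟨hx, h⟩
      · exact Or.inr ⟨hx, h⟩
    intro a b
    rcases le_total a b with h | h
    · exact key a b h
    · exact (key b a h).symm
  have hF : Continuous (fun s : ℝ => ∫ u in (0:ℝ)..s, q' u) :=
    intervalIntegral.continuous_primitive hq'int 0
  have hrep : ∀ s ∈ Ici (1:ℝ),
      (∫ u in (0:ℝ)..s, q' u) - (∫ u in (0:ℝ)..(s-1), q' u) = q s := by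
    intro s hs
    have hs' : (1:ℝ) ≤ s := hs
    have h1 : q s = ∫ u in (s-1)..s, q' u := by
      rw [hq2 s hs']
      refine intervalIntegral.integral_congr ?_
      intro x hx
      rw [uIcc_of_le (by linarith)] at hx
      have : ¬ x < 0 := not_lt.2 (by linarith [hx.1])
      simp [hq'def, this]
    have h2 : (∫ u in (0:ℝ)..(s-1), q' u) + (∫ u in (s-1)..s, q' u)
        = ∫ u in (0:ℝ)..s, q' u :=
      intervalIntegral.integral_add_adjacent_intervals (hq'int _ _) (hq'int _ _)
    rw [h1]
    linarith
  refine ContinuousOn.congr ?_ (fun s hs => (hrep s hs).symm)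
  exact (hF.sub (hF.comp (continuous_id.sub continuous_const))).continuousOn

private lemma q_le_exp (q : ℝ → ℝ)
    (hq1 : ∀ t, 0 ≤ t → t < 1 → q t = Real.exp t)
    (hq2 : ∀ t, 1 ≤ t → q t = ∫ u in (t - 1)..t, q u)
    (hint : ∀ b : ℝ, IntegrableOn q (Icc 0 b))
    (hcont : ContinuousOn q (Ici 1)) :
    ∀ t, 0 ≤ t → q t ≤ Real.exp t := by
  have key : ∀ t : ℝ, 1 ≤ t → q t ≤ Real.exp t := by
    by_contra hc
    push_neg at hc
    obtain ⟨b, hb1, hbq⟩ := hc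
    set A := {t : ℝ | 1 ≤ t ∧ Real.exp t < q t} with hAdef
    have hA : A.Nonempty := ⟨b, hb1, hbq⟩
    have hAbdd : BddBelow A := ⟨1, fun x hx => hx.1⟩
    set c := sInf A with hcdef
    have hc1 : 1 ≤ c := le_csInf hA fun x hx => hx.1
    obtain ⟨u, hu_anti, hu_tend, hu_mem⟩ := exists_seq_tendsto_sInf hA hAbdd
    have hqc : Real.exp c ≤ q c := by
      have h1 : Tendsto (fun n => q (u n)) atTop (𝓝 (q c)) := by
        refine (hcont c hc1).tendsto.comp ?_
        rw [tendsto_nhdsWithin_iff]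
        exact ⟨hu_tend, Eventually.of_forall fun n => (hu_mem n).1⟩
      have h2 : Tendsto (fun n => Real.exp (u n)) atTop (𝓝 (Real.exp c)) :=
        (Real.continuous_exp.tendsto c).comp hu_tend
      exact le_of_tendsto_of_tendsto' h2 h1 fun n => (hu_mem n).2.le
    have hlow : ∀ x : ℝ, 0 ≤ x → x < c → q x ≤ Real.exp x := by
      intro x hx0 hxc
      rcases lt_or_ge x 1 with h | h
      · rw [hq1 x hx0 h]
      · by_contra hconx
        push_neg at hconx
        have : c ≤ x := csInf_le hAbdd ⟨h, hconx⟩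
        linarith
    have hle : q c ≤ Real.exp c - Real.exp (c-1) := by
      rw [hq2 c hc1]
      have hint1 : IntervalIntegrable q volume (c-1) c := by
        rw [intervalIntegrable_iff_integrableOn_Ioc_of_le (by linarith)]
        exact (hint c).mono_set fun x hx => ⟨by linarith [hx.1], hx.2⟩
      have hint2 : IntervalIntegrable Real.exp volume (c-1) c :=
        Real.continuous_exp.intervalIntegrable _ _
      have hae : q ≤ᵐ[volume.restrict (Icc (c-1) c)] Real.exp := by
        have hne : ∀ᵐ (x:ℝ) ∂(volume.restrict (Icc (c-1) c)), x ≠ c :=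
          ae_restrict_of_ae (compl_mem_ae_iff.2 (measure_singleton c))
        filter_upwards [hne, ae_restrict_mem measurableSet_Icc] with x hx hmem
        exact hlow x (by linarith [hmem.1]) (lt_of_le_of_ne hmem.2 hx)
      have := intervalIntegral.integral_mono_ae_restrict (by linarith : c-1 ≤ c)
        hint1 hint2 hae
      rwa [integral_exp] at this
    have : (0:ℝ) < Real.exp (c-1) := Real.exp_pos _
    linarith
  intro t ht
  rcases lt_or_ge t 1 with h | h
  · rw [hq1 t ht h]
  · exact key t h

set_option maxHeartbeats 1000000 in
/-- If `r : [0,T] → ℝ` is right continuous, satisfies the approximate renewal inequalities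
with parameter `0 < η < 1`, then `sup_{t∈[0,T]} |r t - q t| ≤ 4 η e^{(1+η) T}`, where `q` is
the unique bounded solution of the renewal equation. -/
theorem stmt5 (η T : ℝ) (hη0 : 0 < η) (hη1 : η < 1)
    (r q : ℝ → ℝ)
    (hrc : ∀ t, 0 ≤ t → t ≤ T → ContinuousWithinAt r (Set.Icc t T) t)
    (hra : ∀ t, 0 ≤ t → t < 1 → t ≤ T →
      (1 - η) * Real.exp ((1 - η) * t) < r t ∧ r t < (1 + η) * Real.exp ((1 + η) * t))
    (hrb : ∀ t, 1 ≤ t → t ≤ T →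
      (1 - η) * (∫ u in (t - 1)..t, r u) < r t ∧ r t < (1 + η) * (∫ u in (t - 1)..t, r u))
    (hq0 : ∀ t, 0 ≤ t → 0 ≤ q t)
    (hqb : ∃ C : ℝ, ∀ t, 0 ≤ t → q t ≤ C)
    (hq1 : ∀ t, 0 ≤ t → t < 1 → q t = Real.exp t)
    (hq2 : ∀ t, 1 ≤ t → q t = ∫ u in (t - 1)..t, q u) :
    ∀ t, 0 ≤ t → t ≤ T → |r t - q t| ≤ 4 * η * Real.exp ((1 + η) * T) := by
  obtain ⟨C, hqbC⟩ := hqb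
  have hint : ∀ b : ℝ, IntegrableOn q (Icc 0 b) := q_int q C hq0 hqbC hq1 hq2
  have hcont : ContinuousOn q (Ici 1) := q_cont q hq2 hint
  have hqe : ∀ t, 0 ≤ t → q t ≤ Real.exp t := q_le_exp q hq1 hq2 hint hcont
  set e1 := Real.exp 1 with he1def
  have he1lb : (2.7:ℝ) < e1 := lt_trans (by norm_num) Real.exp_one_gt_d9
  have he1ub : e1 < 2.7182818286 := Real.exp_one_lt_d9
  -- the strict barrier claim
  have key : ∀ t, 0 ≤ t → t ≤ T → |r t - q t| < e1 * η * Real.exp ((1+η)*t) := by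
    have good01 : ∀ t, 0 ≤ t → t < 1 → t ≤ T →
        |r t - q t| < e1 * η * Real.exp ((1+η)*t) := by
      intro t ht0 ht1 htT
      obtain ⟨h1, h2⟩ := hra t ht0 ht1 htT
      rw [hq1 t ht0 ht1, abs_sub_lt_iff]
      have hPX : Real.exp ((1+η)*t) = Real.exp t * Real.exp (η*t) := by
        rw [← Real.exp_add]; ring_nf
      have hPZ : Real.exp ((1-η)*t) = Real.exp t * Real.exp (-(η*t)) := by
        rw [← Real.exp_add]; ring_nf
      rw [hPX] at h2 ⊢
      rw [hPZ] at h1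
      set P := Real.exp t with hPdef
      set X := Real.exp (η*t) with hXdef
      set Z := Real.exp (-(η*t)) with hZdef
      have hX1 : 1 ≤ X := Real.one_le_exp (by positivity)
      have hXY : X ≤ Real.exp η := Real.exp_le_exp.2 (by nlinarith)
      have hY1 : (1-η) * Real.exp η ≤ 1 := by
        have h := Real.add_one_le_exp (-η)
        have hm : Real.exp (-η) * Real.exp η = 1 := by rw [← Real.exp_add]; simp
        nlinarith [Real.exp_pos η]
      have hZlb : 1 - η*t ≤ Z := by
        have := Real.add_one_le_exp (-(η*t)); linarith
      have hP : 0 < P := Real.exp_pos t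
      have hXpos : 0 < X := Real.exp_pos _
      constructor
      · have hc1 : (1+η-e1*η)*X ≤ 1 := by
          nlinarith [mul_le_mul_of_nonneg_left hXY (by linarith : (0:ℝ) ≤ 1-η),
            mul_nonneg (mul_nonneg hη0.le (by linarith : (0:ℝ) ≤ e1-2))
              (by linarith : (0:ℝ) ≤ X - 1)]
        nlinarith [mul_nonneg hP.le (by linarith : (0:ℝ) ≤ 1 - (1+η-e1*η)*X)]
      · have hc2 : 1 - (1-η)*Z ≤ e1*η := by
          nlinarith [mul_nonneg (by linarith : (0:ℝ) ≤ 1-η)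
              (by linarith : (0:ℝ) ≤ Z - (1-η*t)),
            mul_nonneg hη0.le (mul_nonneg (by linarith : (0:ℝ) ≤ 1-t)
              (by linarith : (0:ℝ) ≤ 1-η)),
            mul_pos (by linarith : (0:ℝ) < e1-2) hη0]
        nlinarith [mul_nonneg hP.le (by linarith : (0:ℝ) ≤ e1*η - (1 - (1-η)*Z)),
          mul_nonneg (mul_nonneg (mul_nonneg (by linarith : (0:ℝ) ≤ e1) hη0.le) hP.le)
            (by linarith : (0:ℝ) ≤ X - 1)]
    by_contra hcon
    push_neg at hcon
    obtain ⟨t₁, ht₁0, ht₁T, ht₁⟩ := hcon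
    set S : Set ℝ := {t | 0 ≤ t ∧ t ≤ T ∧ e1 * η * Real.exp ((1+η)*t) ≤ |r t - q t|}
      with hSdef
    have hSne : S.Nonempty := ⟨t₁, ht₁0, ht₁T, ht₁⟩
    have hSbdd : BddBelow S := ⟨0, fun x hx => hx.1⟩
    set c := sInf S with hcdef
    have hc0 : 0 ≤ c := le_csInf hSne fun x hx => hx.1
    have hcT : c ≤ T := le_trans (csInf_le hSbdd ⟨ht₁0, ht₁T, ht₁⟩) ht₁T
    obtain ⟨u, hu_anti, hu_tend, hu_mem⟩ := exists_seq_tendsto_sInf hSne hSbdd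
    have huc : ∀ n, c ≤ u n := fun n => csInf_le hSbdd (hu_mem n)
    have hu0 : ∀ n, 0 ≤ u n := fun n => (hu_mem n).1
    have huT : ∀ n, u n ≤ T := fun n => (hu_mem n).2.1
    have hrlim : Tendsto (fun n => r (u n)) atTop (𝓝 (r c)) := by
      refine (hrc c hc0 hcT).tendsto.comp ?_
      rw [tendsto_nhdsWithin_iff]
      exact ⟨hu_tend, Eventually.of_forall fun n => ⟨huc n, huT n⟩⟩
    have hqlim : Tendsto (fun n => q (u n)) atTop (𝓝 (q c)) := by
      rcases lt_or_ge c 1 with h | h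
      · have hev : ∀ᶠ n in atTop, u n < 1 := hu_tend.eventually_lt_const h
        have hexp : Tendsto (fun n => Real.exp (u n)) atTop (𝓝 (Real.exp c)) :=
          (Real.continuous_exp.tendsto c).comp hu_tend
        rw [hq1 c hc0 h]
        refine hexp.congr' ?_
        filter_upwards [hev] with n hn
        exact (hq1 (u n) (hu0 n) hn).symm
      · refine (hcont c h).tendsto.comp ?_
        rw [tendsto_nhdsWithin_iff]
        exact ⟨hu_tend, Eventually.of_forall fun n => le_trans h (huc n)⟩
    have hclim : Tendsto (fun n => e1 * η * Real.exp ((1+η)*(u n))) atTop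
        (𝓝 (e1 * η * Real.exp ((1+η)*c))) := by
      have hco : Continuous fun s : ℝ => e1 * η * Real.exp ((1+η)*s) :=
        continuous_const.mul (Real.continuous_exp.comp (continuous_const.mul continuous_id))
      exact (hco.tendsto c).comp hu_tend
    have hmemc : e1 * η * Real.exp ((1+η)*c) ≤ |r c - q c| :=
      le_of_tendsto_of_tendsto' hclim ((hrlim.sub hqlim).abs) fun n => (hu_mem n).2.2
    have hc1 : 1 ≤ c := by
      by_contra h
      push_neg at h
      exact absurd hmemc (not_le.2 (good01 c hc0 h hcT))
    have hwin : ∀ x : ℝ, 0 ≤ x → x < c → |r x - q x| < e1 * η * Real.exp ((1+η)*x) := by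
      intro x hx0 hxc
      by_contra hcx
      push_neg at hcx
      have : c ≤ x := csInf_le hSbdd ⟨hx0, by linarith, hcx⟩
      linarith
    obtain ⟨hr1, hr2⟩ := hrb c hc1 hcT
    have hrint : IntervalIntegrable r volume (c-1) c := by
      by_contra h
      rw [intervalIntegral.integral_undef h] at hr1 hr2
      simp only [mul_zero] at hr1 hr2
      linarith
    have hqi : IntervalIntegrable q volume (c-1) c := by
      rw [intervalIntegrable_iff_integrableOn_Ioc_of_le (by linarith)]
      exact (hint c).mono_set fun x hx => ⟨by linarith [hx.1], hx.2⟩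
    have hEcont : Continuous fun s : ℝ => Real.exp ((1+η)*s) :=
      Real.continuous_exp.comp (continuous_const.mul continuous_id)
    have hEi : IntervalIntegrable (fun x => Real.exp ((1+η)*x)) volume (c-1) c :=
      hEcont.intervalIntegrable _ _
    have hUi : IntervalIntegrable (fun x => q x + e1*η*Real.exp ((1+η)*x)) volume (c-1) c :=
      hqi.add (hEi.const_mul (e1*η))
    have hLi : IntervalIntegrable (fun x => q x - e1*η*Real.exp ((1+η)*x)) volume (c-1) c :=
      hqi.sub (hEi.const_mul (e1*η))
    have hne : ∀ᵐ (x:ℝ) ∂(volume.restrict (Icc (c-1) c)), x ≠ c :=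
      ae_restrict_of_ae (compl_mem_ae_iff.2 (measure_singleton c))
    have haeU : ∀ᵐ (x:ℝ) ∂(volume.restrict (Icc (c-1) c)),
        r x ≤ q x + e1*η*Real.exp ((1+η)*x) := by
      filter_upwards [hne, ae_restrict_mem measurableSet_Icc] with x hx hmem
      have h := abs_lt.1 (hwin x (by linarith [hmem.1]) (lt_of_le_of_ne hmem.2 hx))
      linarith [h.2]
    have haeL : ∀ᵐ (x:ℝ) ∂(volume.restrict (Icc (c-1) c)),
        q x - e1*η*Real.exp ((1+η)*x) ≤ r x := by
      filter_upwards [hne, ae_restrict_mem measurableSet_Icc] with x hx hmem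
      have h := abs_lt.1 (hwin x (by linarith [hmem.1]) (lt_of_le_of_ne hmem.2 hx))
      linarith [h.1]
    have hIU : (∫ x in (c-1)..c, r x)
        ≤ ∫ x in (c-1)..c, (q x + e1*η*Real.exp ((1+η)*x)) :=
      intervalIntegral.integral_mono_ae_restrict (by linarith : c-1 ≤ c) hrint hUi haeU
    have hIL : (∫ x in (c-1)..c, (q x - e1*η*Real.exp ((1+η)*x)))
        ≤ ∫ x in (c-1)..c, r x :=
      intervalIntegral.integral_mono_ae_restrict (by linarith : c-1 ≤ c) hLi hrint haeL
    have hEval : (∫ x in (c-1)..c, Real.exp ((1+η)*x))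
        = (Real.exp ((1+η)*c) - Real.exp ((1+η)*(c-1)))/(1+η) := by
      rw [intervalIntegral.integral_comp_mul_left (fun x => Real.exp x)
        (by linarith : (1:ℝ)+η ≠ 0), integral_exp, smul_eq_mul]
      field_simp
    have hsplitU : (∫ x in (c-1)..c, (q x + e1*η*Real.exp ((1+η)*x)))
        = q c + e1*η*((Real.exp ((1+η)*c) - Real.exp ((1+η)*(c-1)))/(1+η)) := by
      rw [intervalIntegral.integral_add hqi (hEi.const_mul (e1*η)),
        intervalIntegral.integral_const_mul, hEval, ← hq2 c hc1]
    have hsplitL : (∫ x in (c-1)..c, (q x - e1*η*Real.exp ((1+η)*x)))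
        = q c - e1*η*((Real.exp ((1+η)*c) - Real.exp ((1+η)*(c-1)))/(1+η)) := by
      rw [intervalIntegral.integral_sub hqi (hEi.const_mul (e1*η)),
        intervalIntegral.integral_const_mul, hEval, ← hq2 c hc1]
    set A := Real.exp ((1+η)*c) with hAdef
    set A' := Real.exp ((1+η)*(c-1)) with hA'def
    set Q := q c with hQdef
    set ID := (A - A')/(1+η) with hIDdef
    have hA'A : A' ≤ A := Real.exp_le_exp.2
      (mul_le_mul_of_nonneg_left (by linarith : c-1 ≤ c) (by linarith : (0:ℝ) ≤ 1+η))
    have hA'pos : 0 < A' := Real.exp_pos _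
    have hQA : Q ≤ e1 * A' := by
      have h1 : Q ≤ Real.exp c := hqe c hc0
      have h2 : Real.exp c ≤ Real.exp (1 + (1+η)*(c-1)) :=
        Real.exp_le_exp.2 (by linarith [mul_nonneg hη0.le (by linarith : (0:ℝ) ≤ c-1)])
      have h3 : Real.exp (1 + (1+η)*(c-1)) = e1 * A' := by
        rw [Real.exp_add]
      linarith
    have hQ0 : 0 ≤ Q := hq0 c hc0
    have hID : (1+η) * ID = A - A' := by
      rw [hIDdef]
      field_simp
    have hID0 : 0 ≤ ID := div_nonneg (by linarith) (by linarith)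
    have hIU' : (∫ x in (c-1)..c, r x) ≤ Q + e1*η*ID := by
      rw [hsplitU] at hIU
      exact hIU
    have hIL' : Q - e1*η*ID ≤ ∫ x in (c-1)..c, r x := by
      rw [hsplitL] at hIL
      exact hIL
    have hup : r c < (1+η) * (Q + e1*η*ID) :=
      lt_of_lt_of_le hr2 (mul_le_mul_of_nonneg_left hIU' (by linarith))
    have hlo : (1-η) * (Q - e1*η*ID) < r c :=
      lt_of_le_of_lt (mul_le_mul_of_nonneg_left hIL' (by linarith)) hr1
    have hIDe : e1*η*((1+η)*ID) = e1*η*(A-A') := by rw [hID]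
    rcases le_abs.1 hmemc with h | h
    · nlinarith [mul_le_mul_of_nonneg_left hQA hη0.le, hIDe, hup, h]
    · nlinarith [mul_le_mul_of_nonneg_left hQA hη0.le, hIDe, hlo, h,
        mul_nonneg (mul_nonneg (mul_nonneg (by linarith : (0:ℝ) ≤ e1) hη0.le) hη0.le) hID0]
  intro t ht0 htT
  have h1 := key t ht0 htT
  have h2 : Real.exp ((1+η)*t) ≤ Real.exp ((1+η)*T) := Real.exp_le_exp.2
    (mul_le_mul_of_nonneg_left htT (by linarith : (0:ℝ) ≤ 1+η))
  have h3 : e1*η*Real.exp ((1+η)*t) ≤ e1*η*Real.exp ((1+η)*T) :=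
    mul_le_mul_of_nonneg_left h2 (by positivity)
  have h4 : e1*η*Real.exp ((1+η)*T) ≤ 4*η*Real.exp ((1+η)*T) :=
    mul_le_mul_of_nonneg_right
      (mul_le_mul_of_nonneg_right (by linarith : e1 ≤ 4) hη0.le)
      (Real.exp_pos _).le
  linarith
end

section
/- In the setting of the approximate renewal inequalities: let r1 and r2 be the unique bounded nonnegative functions on [0,T] with r1(t) = (1−η)e^{(1−η)t} on [0,1), r1(t) = (1−η)∫_{t-1}^t r1(u) du on [1,T], and similarly r2 with 1+η in place of 1−η. If r is right continuous and satisfies the strict inequalities (1−η)e^{(1−η)t} < r(t) < (1+η)e^{(1+η)t} on [0,1) and (1−η)∫_{t-1}^t r(u) du < r(t) < (1+η)∫_{t-1}^t r(u) du on [1,T], then r1(t) ≤ r(t) ≤ r2(t) for all t ∈ [0,T]. -/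
open MeasureTheory Set Filter

/-- Stepwise integrability: if `f` is integrable on `[0,1]` and on every window
`(s-1, s]` for `s ∈ [1,b]`, then it is integrable on `[0,s]` for every `s ∈ [1,b]`. -/
lemma renewal_step_integrable {f : ℝ → ℝ} {b : ℝ}
    (h01 : IntegrableOn f (Icc 0 1))
    (hW : ∀ s, 1 ≤ s → s ≤ b → IntegrableOn f (Ioc (s - 1) s)) :
    ∀ s, 1 ≤ s → s ≤ b → IntegrableOn f (Icc 0 s) := by
  have key : ∀ n : ℕ, ∀ s, 1 ≤ s → s ≤ b → s ≤ 1 + n → IntegrableOn f (Icc 0 s) := by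
    intro n
    induction n with
    | zero =>
      intro s h1 _ h3
      have hs : s = 1 := le_antisymm (by simpa using h3) h1
      rwa [hs]
    | succ n ih =>
      intro s h1 h2 h3
      by_cases hs : s ≤ 1 + n
      · exact ih s h1 h2 hs
      · push_neg at hs
        have hIH : IntegrableOn f (Icc 0 (max 1 (s - 1))) := by
          refine ih (max 1 (s - 1)) (le_max_left _ _)
            (le_trans (max_le h1 (by linarith)) h2) ?_
          refine max_le ?_ (by push_cast at h3 ⊢; linarith)
          exact_mod_cast le_add_of_nonneg_right n.cast_nonneg
        have hw := hW s h1 h2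
        have hsub : Icc 0 s ⊆ Icc 0 (max 1 (s - 1)) ∪ Ioc (s - 1) s := by
          intro u hu
          rcases le_or_gt u (max 1 (s - 1)) with h | h
          · exact Or.inl ⟨hu.1, h⟩
          · exact Or.inr ⟨lt_of_le_of_lt (le_max_right 1 (s - 1)) h, hu.2⟩
        exact (hIH.union hw).mono_set hsub
  intro s h1 h2
  obtain ⟨n, hn⟩ := exists_nat_ge s
  exact key n s h1 h2 (by linarith)

/-- Bootstrap integrability for solutions of the renewal-type equation:
a function bounded on `[0,T]`, integrable on `[0,1]`, and satisfying
`f t = c * ∫_{t-1}^t f` on `[1,T]`, is integrable on `[0,T]`. -/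
lemma renewal_bootstrap {f : ℝ → ℝ} {T C c : ℝ} (hT : 1 ≤ T)
    (hbd : ∀ t ∈ Icc (0 : ℝ) T, |f t| ≤ C)
    (h01 : IntegrableOn f (Icc 0 1))
    (hb : ∀ t, 1 ≤ t → t ≤ T → f t = c * ∫ u in (t - 1)..t, f u) :
    IntegrableOn f (Icc 0 T) := by
  set N : Set ℝ := {t | 1 ≤ t ∧ t ≤ T ∧ ¬ IntegrableOn f (Ioc (t - 1) t)} with hN
  have hfN : ∀ t ∈ N, f t = 0 := by
    intro t ht
    rw [hb t ht.1 ht.2.1, intervalIntegral.integral_of_le (by linarith),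
      integral_undef ht.2.2, mul_zero]
  have hNempty : N = ∅ := by
    by_contra hne'
    rw [← Ne, ← nonempty_iff_ne_empty] at hne'
    have hbdd : BddBelow N := ⟨1, fun x hx => hx.1⟩
    set t0 := sInf N with ht0def
    have ht01 : 1 ≤ t0 := le_csInf hne' fun x hx => hx.1
    have ht0T : t0 ≤ T := by
      obtain ⟨x, hx⟩ := hne'
      exact le_trans (csInf_le hbdd hx) hx.2.1
    have hW : ∀ s, 1 ≤ s → s < t0 → IntegrableOn f (Ioc (s - 1) s) := by
      intro s h1 h2
      by_contra hni
      exact absurd (csInf_le hbdd ⟨h1, le_trans h2.le ht0T, hni⟩) (not_le.2 h2)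
    have hIs : ∀ s, 1 ≤ s → s < t0 → IntegrableOn f (Icc 0 s) := fun s h1 h2 =>
      renewal_step_integrable h01
        (fun u hu1 hu2 => hW u hu1 (lt_of_le_of_lt hu2 h2)) s h1 le_rfl
    have hIco : IntegrableOn f (Ico 0 t0) := by
      rcases eq_or_lt_of_le ht01 with heq | hlt
      · exact h01.mono_set (by rw [← heq]; exact Ico_subset_Icc_self)
      · have hseq : Ico (0 : ℝ) t0 = ⋃ n : ℕ, Icc 0 (t0 - (t0 - 1) / (n + 1)) := by
          ext u
          constructor
          · rintro ⟨hu0, hut⟩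
            rcases le_or_gt u 1 with h | h
            · refine mem_iUnion.2 ⟨0, hu0, ?_⟩
              simp only [Nat.cast_zero, zero_add, div_one]
              linarith
            · obtain ⟨n, hn⟩ := exists_nat_gt ((t0 - 1) / (t0 - u))
              refine mem_iUnion.2 ⟨n, hu0, ?_⟩
              have h1 : (0 : ℝ) < t0 - u := by linarith
              rw [div_lt_iff₀ h1] at hn
              have h2 : (t0 - 1) / (n + 1) < t0 - u := by
                rw [div_lt_iff₀ (by positivity)]
                nlinarith [(by positivity : (0:ℝ) ≤ (n:ℝ))]
              linarith
          · intro hu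
            obtain ⟨n, hn⟩ := mem_iUnion.1 hu
            have h0 : (0 : ℝ) < (t0 - 1) / (n + 1) :=
              div_pos (by linarith) (by positivity)
            exact ⟨hn.1, by linarith [hn.2]⟩
        have hmeas : AEStronglyMeasurable f (volume.restrict (Ico 0 t0)) := by
          rw [hseq, aestronglyMeasurable_iUnion_iff]
          intro n
          have hn0 : (0:ℝ) ≤ (n:ℝ) := by positivity
          have hd0 : (0 : ℝ) < (t0 - 1) / (n + 1) :=
            div_pos (by linarith) (by positivity)
          have hd1 : (t0 - 1) / (n + 1) ≤ t0 - 1 :=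
            div_le_self (by linarith) (by linarith)
          exact (hIs (t0 - (t0 - 1) / (n + 1)) (by linarith) (by linarith)).aestronglyMeasurable
        refine Integrable.mono' (integrable_const C) hmeas ?_
        refine (ae_restrict_iff' measurableSet_Ico).2 (ae_of_all _ fun x hx => ?_)
        simpa using hbd x ⟨hx.1, by linarith [hx.2]⟩
    have hIcct0 : IntegrableOn f (Icc 0 t0) := by
      refine hIco.congr_set_ae ?_
      exact (Ico_ae_eq_Icc (μ := volume) (a := (0:ℝ)) (b := t0)).symm
    have ht0notN : t0 ∉ N := by
      intro h
      exact h.2.2 (hIcct0.mono_set fun u hu => ⟨by linarith [hu.1], hu.2⟩)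
    have ht0ltT : t0 < T := by
      rcases lt_or_eq_of_le ht0T with h | heq
      · exact h
      · exfalso
        obtain ⟨x, hx⟩ := hne'
        have hx0 : x = t0 := le_antisymm (heq ▸ hx.2.1) (csInf_le hbdd hx)
        exact ht0notN (hx0 ▸ hx)
    have hup : ∀ t', t0 < t' → t' ≤ min (t0 + 1) T → t' ∈ N := by
      intro t' h1 h2
      obtain ⟨t, htN, htlt⟩ := exists_lt_of_csInf_lt hne' (show sInf N < t' from h1)
      have htgt : t0 < t :=
        lt_of_le_of_ne (csInf_le hbdd htN) fun h => ht0notN (h ▸ htN)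
      refine ⟨by linarith, le_trans h2 (min_le_right _ _), ?_⟩
      intro hint
      have h2' : t' ≤ t0 + 1 := le_trans h2 (min_le_left _ _)
      have hsub : Ioc (t - 1) t ⊆ Icc 0 t0 ∪ Ioc (t' - 1) t' := by
        intro u hu
        rcases le_or_gt u (t' - 1) with h | h
        · exact Or.inl ⟨by linarith [hu.1, htN.1], by linarith⟩
        · exact Or.inr ⟨h, le_trans hu.2 htlt.le⟩
      exact htN.2.2 ((hIcct0.union hint).mono_set hsub)
    set T' := min (t0 + 1) T with hT'def
    have hT' : t0 < T' := lt_min (by linarith) ht0ltT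
    have hzero : ∀ u, t0 < u → u ≤ T' → f u = 0 := fun u h1 h2 => hfN u (hup u h1 h2)
    have hmemT' : T' ∈ N := hup T' hT' le_rfl
    apply hmemT'.2.2
    have hsub : Ioc (T' - 1) T' ⊆ Icc 0 t0 ∪ Ioc t0 T' := by
      intro u hu
      rcases le_or_gt u t0 with h | h
      · exact Or.inl ⟨by linarith [hu.1, hmemT'.1], h⟩
      · exact Or.inr ⟨h, hu.2⟩
    have hz : IntegrableOn f (Ioc t0 T') := by
      have heq : EqOn f (fun _ => (0 : ℝ)) (Ioc t0 T') := fun u hu => hzero u hu.1 hu.2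
      exact integrableOn_zero.congr_fun heq.symm measurableSet_Ioc
    exact (hIcct0.union hz).mono_set hsub
  have hWall : ∀ s, 1 ≤ s → s ≤ T → IntegrableOn f (Ioc (s - 1) s) := by
    intro s h1 h2
    by_contra h
    have : s ∈ N := ⟨h1, h2, h⟩
    rw [hNempty] at this
    exact this
  exact renewal_step_integrable h01 hWall T hT le_rfl

/-- If `r1` (resp. `r2`) is the bounded nonnegative solution of the renewal-type equation
with factor `1-η` (resp. `1+η`), and `r` is right continuous and satisfies the strict
approximate renewal inequalities, then `r1 t ≤ r t ≤ r2 t` on `[0,T]`. -/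
theorem stmt6 (η T : ℝ) (hη0 : 0 < η) (hη1 : η < 1) (hT : 1 < T)
    (r r1 r2 : ℝ → ℝ)
    (hr1nonneg : ∀ t, 0 ≤ t → t ≤ T → 0 ≤ r1 t)
    (hr1bdd : ∃ C : ℝ, ∀ t, 0 ≤ t → t ≤ T → r1 t ≤ C)
    (hr1a : ∀ t, 0 ≤ t → t < 1 → r1 t = (1 - η) * Real.exp ((1 - η) * t))
    (hr1b : ∀ t, 1 ≤ t → t ≤ T → r1 t = (1 - η) * ∫ u in (t - 1)..t, r1 u)
    (hr2nonneg : ∀ t, 0 ≤ t → t ≤ T → 0 ≤ r2 t)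
    (hr2bdd : ∃ C : ℝ, ∀ t, 0 ≤ t → t ≤ T → r2 t ≤ C)
    (hr2a : ∀ t, 0 ≤ t → t < 1 → r2 t = (1 + η) * Real.exp ((1 + η) * t))
    (hr2b : ∀ t, 1 ≤ t → t ≤ T → r2 t = (1 + η) * ∫ u in (t - 1)..t, r2 u)
    (hrc : ∀ t, 0 ≤ t → t ≤ T → ContinuousWithinAt r (Set.Icc t T) t)
    (hra : ∀ t, 0 ≤ t → t < 1 →
      (1 - η) * Real.exp ((1 - η) * t) < r t ∧ r t < (1 + η) * Real.exp ((1 + η) * t))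
    (hrb : ∀ t, 1 ≤ t → t ≤ T →
      (1 - η) * (∫ u in (t - 1)..t, r u) < r t ∧ r t < (1 + η) * (∫ u in (t - 1)..t, r u)) :
    ∀ t, 0 ≤ t → t ≤ T → r1 t ≤ r t ∧ r t ≤ r2 t := by
  -- integrability of r1 and r2 on [0,T]
  have hInt01 : ∀ (c : ℝ) (f : ℝ → ℝ), (∀ t, 0 ≤ t → t < 1 → f t = c * Real.exp (c * t)) →
      IntegrableOn f (Icc 0 1) := by
    intro c f hf
    have hcont : Continuous fun t => c * Real.exp (c * t) := by continuity
    have h1 : IntegrableOn f (Ico 0 1) := by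
      refine ((hcont.integrableOn_Icc (a := 0) (b := 1)).mono_set
        Ico_subset_Icc_self).congr_fun ?_ measurableSet_Ico
      exact fun u hu => (hf u hu.1 hu.2).symm
    exact h1.congr_set_ae (Ico_ae_eq_Icc (μ := volume)).symm
  obtain ⟨C1, hC1⟩ := hr1bdd
  obtain ⟨C2, hC2⟩ := hr2bdd
  have r1int : IntegrableOn r1 (Icc 0 T) := by
    refine renewal_bootstrap hT.le (C := C1) ?_ (hInt01 (1 - η) r1 hr1a) hr1b
    intro t ht
    rw [abs_of_nonneg (hr1nonneg t ht.1 ht.2)]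
    exact hC1 t ht.1 ht.2
  have r2int : IntegrableOn r2 (Icc 0 T) := by
    refine renewal_bootstrap hT.le (C := C2) ?_ (hInt01 (1 + η) r2 hr2a) hr2b
    intro t ht
    rw [abs_of_nonneg (hr2nonneg t ht.1 ht.2)]
    exact hC2 t ht.1 ht.2
  -- integrability of r on every window
  have hrwin : ∀ t, 1 ≤ t → t ≤ T → IntegrableOn r (Ioc (t - 1) t) := by
    intro t h1 h2
    by_contra hni
    have hz : (∫ u in (t - 1)..t, r u) = 0 := by
      rw [intervalIntegral.integral_of_le (by linarith)]
      exact integral_undef hni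
    obtain ⟨hlo, hhi⟩ := hrb t h1 h2
    rw [hz] at hlo hhi
    linarith
  -- the failure set
  set F : Set ℝ := {t | 0 ≤ t ∧ t ≤ T ∧ (r t < r1 t ∨ r2 t < r t)} with hF
  suffices hFe : F = ∅ by
    intro t h0 hT'
    by_contra hc
    have hmem : t ∈ F := by
      refine ⟨h0, hT', ?_⟩
      rcases lt_or_ge (r t) (r1 t) with h | h
      · exact Or.inl h
      · exact Or.inr (lt_of_not_ge fun h2 => hc ⟨h, h2⟩)
    rw [hFe] at hmem
    exact hmem
  by_contra hne'
  rw [← Ne, ← nonempty_iff_ne_empty] at hne'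
  have hF1 : ∀ x ∈ F, 1 ≤ x := by
    intro x hx
    by_contra h
    push_neg at h
    obtain ⟨ha1, ha2⟩ := hra x hx.1 h
    rw [← hr1a x hx.1 h] at ha1
    rw [← hr2a x hx.1 h] at ha2
    rcases hx.2.2 with h' | h' <;> linarith
  have hbdd : BddBelow F := ⟨1, hF1⟩
  set t0 := sInf F with ht0def
  have ht01 : 1 ≤ t0 := le_csInf hne' hF1
  have ht0T : t0 ≤ T := by
    obtain ⟨x, hx⟩ := hne'
    exact le_trans (csInf_le hbdd hx) hx.2.1
  have hbelow : ∀ s, 0 ≤ s → s < t0 → r1 s ≤ r s ∧ r s ≤ r2 s := by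
    intro s h0 hlt
    have hsT : s ≤ T := by linarith
    by_contra hc
    have hmem : s ∈ F := by
      refine ⟨h0, hsT, ?_⟩
      rcases lt_or_ge (r s) (r1 s) with h | h
      · exact Or.inl h
      · exact Or.inr (lt_of_not_ge fun h2 => hc ⟨h, h2⟩)
    exact absurd (csInf_le hbdd hmem) (not_le.2 hlt)
  -- integral comparisons on the window (t0-1, t0]
  have hrw : IntegrableOn r (Ioc (t0 - 1) t0) := hrwin t0 ht01 ht0T
  have hres : volume.restrict (Ioc (t0 - 1) t0) = volume.restrict (Ico (t0 - 1) t0) :=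
    Measure.restrict_congr_set (Ioc_ae_eq_Icc.trans Ico_ae_eq_Icc.symm)
  have hrw' : IntegrableOn r (Ico (t0 - 1) t0) := by
    show Integrable r (volume.restrict (Ico (t0 - 1) t0))
    rw [← hres]
    exact hrw
  have hsubw : Ico (t0 - 1) t0 ⊆ Icc 0 T := fun u hu =>
    ⟨by linarith [hu.1], by linarith [hu.2]⟩
  have hcomp1 : (∫ u in (t0 - 1)..t0, r1 u) ≤ ∫ u in (t0 - 1)..t0, r u := by
    rw [intervalIntegral.integral_of_le (by linarith : t0 - 1 ≤ t0),
      intervalIntegral.integral_of_le (by linarith : t0 - 1 ≤ t0), hres]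
    refine setIntegral_mono_on (r1int.mono_set hsubw) hrw' measurableSet_Ico ?_
    intro x hx
    exact (hbelow x (by linarith [hx.1]) hx.2).1
  have hcomp2 : (∫ u in (t0 - 1)..t0, r u) ≤ ∫ u in (t0 - 1)..t0, r2 u := by
    rw [intervalIntegral.integral_of_le (by linarith : t0 - 1 ≤ t0),
      intervalIntegral.integral_of_le (by linarith : t0 - 1 ≤ t0), hres]
    refine setIntegral_mono_on hrw' (r2int.mono_set hsubw) measurableSet_Ico ?_
    intro x hx
    exact (hbelow x (by linarith [hx.1]) hx.2).2
  obtain ⟨hlo, hhi⟩ := hrb t0 ht01 ht0T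
  have h1strict : r1 t0 < r t0 := by
    rw [hr1b t0 ht01 ht0T]
    calc (1 - η) * ∫ u in (t0 - 1)..t0, r1 u
        ≤ (1 - η) * ∫ u in (t0 - 1)..t0, r u :=
          mul_le_mul_of_nonneg_left hcomp1 (by linarith)
      _ < r t0 := hlo
  have h2strict : r t0 < r2 t0 := by
    rw [hr2b t0 ht01 ht0T]
    calc r t0 < (1 + η) * ∫ u in (t0 - 1)..t0, r u := hhi
      _ ≤ (1 + η) * ∫ u in (t0 - 1)..t0, r2 u :=
          mul_le_mul_of_nonneg_left hcomp2 (by linarith)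
  -- right continuity of r1 and r2 at t0 within [t0, T]
  have hcw : ∀ (f : ℝ → ℝ) (c : ℝ), IntegrableOn f (Icc 0 T) →
      (∀ t, 1 ≤ t → t ≤ T → f t = c * ∫ u in (t - 1)..t, f u) →
      ContinuousWithinAt f (Icc t0 T) t0 := by
    intro f c hint hfb
    set P : ℝ → ℝ := fun x => ∫ u in (0 : ℝ)..x, f u with hP
    have hPc : ContinuousOn P (Icc 0 T) := by
      have := intervalIntegral.continuousOn_primitive_interval
        (a := (0 : ℝ)) (b := T) (μ := volume) (f := f)
        (by rwa [uIcc_of_le (by linarith : (0:ℝ) ≤ T)])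
      rwa [uIcc_of_le (by linarith : (0:ℝ) ≤ T)] at this
    have hii : ∀ x, 0 ≤ x → x ≤ T → IntervalIntegrable f volume 0 x := by
      intro x h0 hx
      exact (hint.mono_set (by rw [uIcc_of_le h0]; exact Icc_subset_Icc le_rfl hx)).intervalIntegrable
    have heq : ∀ t ∈ Icc t0 T, f t = c * (P t - P (t - 1)) := by
      intro t ht
      have h1t : 1 ≤ t := le_trans ht01 ht.1
      rw [hfb t h1t ht.2]
      congr 1
      rw [intervalIntegral.integral_interval_sub_left (hii t (by linarith) ht.2)
        (hii (t - 1) (by linarith) (by linarith [ht.2]))]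
    have c1 : ContinuousWithinAt P (Icc t0 T) t0 :=
      (hPc t0 ⟨by linarith, ht0T⟩).mono (Icc_subset_Icc (by linarith) le_rfl)
    have c2 : ContinuousWithinAt (fun t => P (t - 1)) (Icc t0 T) t0 := by
      have hc : ContinuousWithinAt P (Icc 0 T) (t0 - 1) :=
        hPc (t0 - 1) ⟨by linarith, by linarith⟩
      have hf : ContinuousWithinAt (fun t : ℝ => t - 1) (Icc t0 T) t0 :=
        (continuous_sub_right 1).continuousWithinAt
      have hmaps : MapsTo (fun t : ℝ => t - 1) (Icc t0 T) (Icc 0 T) :=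
        fun x hx => ⟨show (0:ℝ) ≤ x - 1 by linarith [hx.1, ht01],
          show x - 1 ≤ T by linarith [hx.2]⟩
      exact ContinuousWithinAt.comp (g := P) (f := fun t : ℝ => t - 1) hc hf hmaps
    have c3 : ContinuousWithinAt (fun t => c * (P t - P (t - 1))) (Icc t0 T) t0 :=
      (c1.sub c2).const_mul c
    exact c3.congr heq (heq t0 ⟨le_rfl, ht0T⟩)
  have hr1cw : ContinuousWithinAt r1 (Icc t0 T) t0 := hcw r1 (1 - η) r1int hr1b
  have hr2cw : ContinuousWithinAt r2 (Icc t0 T) t0 := hcw r2 (1 + η) r2int hr2b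
  have hrcw : ContinuousWithinAt r (Icc t0 T) t0 := hrc t0 (by linarith) ht0T
  -- eventually strict inequalities to the right of t0
  have hev : ∀ᶠ s in nhdsWithin t0 (Icc t0 T), r1 s < r s ∧ r s < r2 s := by
    have e1 : ∀ᶠ s in nhdsWithin t0 (Icc t0 T), r1 s < r s := by
      have ht : Tendsto (fun s => r s - r1 s) (nhdsWithin t0 (Icc t0 T))
          (nhds (r t0 - r1 t0)) := hrcw.sub hr1cw
      have := ht.eventually (eventually_gt_nhds (show (0:ℝ) < r t0 - r1 t0 by linarith))
      filter_upwards [this] with s hs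
      linarith
    have e2 : ∀ᶠ s in nhdsWithin t0 (Icc t0 T), r s < r2 s := by
      have ht : Tendsto (fun s => r2 s - r s) (nhdsWithin t0 (Icc t0 T))
          (nhds (r2 t0 - r t0)) := hr2cw.sub hrcw
      have := ht.eventually (eventually_gt_nhds (show (0:ℝ) < r2 t0 - r t0 by linarith))
      filter_upwards [this] with s hs
      linarith
    exact e1.and e2
  obtain ⟨ε, hε, hball⟩ := Metric.mem_nhdsWithin_iff.1 hev
  have hfinal : t0 + ε / 2 ≤ sInf F := by
    apply le_csInf hne'
    intro x hx
    by_contra h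
    push_neg at h
    have hxt0 : t0 ≤ x := csInf_le hbdd hx
    have hxmem : x ∈ Metric.ball t0 ε ∩ Icc t0 T := by
      constructor
      · rw [Metric.mem_ball, Real.dist_eq, abs_of_nonneg (by linarith)]
        linarith
      · exact ⟨hxt0, hx.2.1⟩
    have := hball hxmem
    rcases hx.2.2 with h' | h' <;> simp only [mem_setOf_eq] at this <;> linarith [this.1, this.2]
  rw [← ht0def] at hfinal
  linarith
end

section
/- Let f_0, f_1, f_2, ... be nonnegative measurable functions on [0,∞) with f_0(t) ≤ N for all t, and suppose f_j(t) ≤ ∫_0^t μ e^{sj(t−u)} f_{j−1}(u) du for all j ≥ 1 and t ≥ 0, where μ, s > 0. Then f_j(t) ≤ N μ^j (e^{st} − 1)^j / (s^j j!) for all j ≥ 0 and t ≥ 0. -/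
open MeasureTheory

lemma key_exp (s u : ℝ) : Real.exp (-(s*u)) * (Real.exp (s*u) - 1) = 1 - Real.exp (-(s*u)) := by
  rw [mul_sub, ← Real.exp_add]
  simp

lemma key_int (s : ℝ) (hs : 0 < s) (j : ℕ) (t : ℝ) (ht : 0 ≤ t) :
    ∫ u in (0:ℝ)..t, Real.exp (s*(j+1)*(t-u)) * (Real.exp (s*u) - 1)^j
      = (Real.exp (s*t) - 1)^(j+1) / ((j+1)*s) := by
  have hd : ∀ u ∈ Set.uIcc (0:ℝ) t, HasDerivAt
      (fun u => Real.exp (s*(j+1)*t) * (1 - Real.exp (-(s*u)))^(j+1) / ((j+1)*s))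
      (Real.exp (s*(j+1)*(t-u)) * (Real.exp (s*u) - 1)^j) u := by
    intro u _
    have h1 : HasDerivAt (fun u : ℝ => Real.exp (-(s*u))) (Real.exp (-(s*u)) * -s) u := by
      have hinner : HasDerivAt (fun u : ℝ => -(s*u)) (-s) u := by
        exact (((hasDerivAt_id u).const_mul s).neg).congr_deriv (by simp)
      exact hinner.exp
    have h2 : HasDerivAt (fun u : ℝ => (1 - Real.exp (-(s*u)))^(j+1))
        ((j+1 : ℕ) * (1 - Real.exp (-(s*u)))^j * (s * Real.exp (-(s*u)))) u := by
      have := ((hasDerivAt_const u (1:ℝ)).sub h1).pow (j+1)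
      exact this.congr_deriv (by simp only [Nat.add_sub_cancel, Pi.sub_apply]; ring)
    have h3 := (h2.const_mul (Real.exp (s*(j+1)*t))).div_const ((j+1)*s)
    refine h3.congr_deriv ?_
    have hpow : (1 - Real.exp (-(s*u)))^j = Real.exp (-(s*u))^j * (Real.exp (s*u) - 1)^j := by
      rw [← mul_pow, key_exp]
    have hexp : Real.exp (s*(j+1)*(t-u)) = Real.exp (s*(j+1)*t) * Real.exp (-(s*u))^(j+1) := by
      rw [← Real.exp_nat_mul, ← Real.exp_add]; congr 1; push_cast; ring
    rw [hexp, hpow, pow_succ]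
    have hne : ((j:ℝ)+1)*s ≠ 0 := by positivity
    field_simp
    push_cast
    ring
  have hcont : IntervalIntegrable
      (fun u => Real.exp (s*(j+1)*(t-u)) * (Real.exp (s*u) - 1)^j) volume 0 t := by
    apply Continuous.intervalIntegrable
    continuity
  rw [intervalIntegral.integral_eq_sub_of_hasDerivAt hd hcont]
  simp only [mul_zero, neg_zero, Real.exp_zero, sub_self, zero_pow (Nat.succ_ne_zero j),
    mul_zero, zero_div, sub_zero]
  have : Real.exp (s*(j+1)*t) * (1 - Real.exp (-(s*t)))^(j+1) = (Real.exp (s*t) - 1)^(j+1) := by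
    have hexp : Real.exp (s*(j+1)*t) = (Real.exp (s*t))^(j+1) := by
      rw [← Real.exp_nat_mul]; congr 1; push_cast; ring
    rw [hexp, ← mul_pow]
    congr 1
    rw [mul_sub, ← Real.exp_add]
    simp
  rw [this]


/-- Deterministic core of the first-moment bound: if `f 0 ≤ N` and
`f j t ≤ ∫_0^t μ e^{sj(t-u)} f (j-1) u du` for all `j ≥ 1`, `t ≥ 0`, then
`f j t ≤ N μ^j (e^{st}-1)^j / (s^j j!)`. -/
theorem stmt10 (N μ s : ℝ) (hN : 0 < N) (hμ : 0 < μ) (hs : 0 < s)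
    (f : ℕ → ℝ → ℝ)
    (hmeas : ∀ j, Measurable (f j))
    (hnonneg : ∀ j t, 0 ≤ t → 0 ≤ f j t)
    (h0 : ∀ t, 0 ≤ t → f 0 t ≤ N)
    (hrec : ∀ j : ℕ, 1 ≤ j → ∀ t, 0 ≤ t →
      f j t ≤ ∫ u in (0 : ℝ)..t, μ * Real.exp (s * (j : ℝ) * (t - u)) * f (j - 1) u) :
    ∀ j : ℕ, ∀ t, 0 ≤ t →
      f j t ≤ N * μ ^ j * (Real.exp (s * t) - 1) ^ j / (s ^ j * (Nat.factorial j : ℝ)) := by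
  intro j
  induction j with
  | zero => intro t ht; simpa using h0 t ht
  | succ j ih =>
    intro t ht
    have hexp_nonneg : 0 ≤ Real.exp (s * t) - 1 := by
      nlinarith [Real.add_one_le_exp (s * t), mul_nonneg hs.le ht]
    have hRHS : 0 ≤ N * μ ^ (j+1) * (Real.exp (s * t) - 1) ^ (j+1) /
        (s ^ (j+1) * (Nat.factorial (j+1) : ℝ)) := by positivity
    have hrec' := hrec (j+1) (by omega) t ht
    simp only [Nat.add_sub_cancel] at hrec'
    set g : ℝ → ℝ := fun u => μ * Real.exp (s * ((j:ℝ)+1) * (t - u)) * f j u with hg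
    have hrec'' : f (j+1) t ≤ ∫ u in (0:ℝ)..t, g u := by
      have : ∀ u : ℝ, g u = μ * Real.exp (s * ((j+1 : ℕ):ℝ) * (t - u)) * f j u := by
        intro u; rw [hg]; push_cast; ring_nf
      simp only [this]; exact hrec' 
    by_cases hint : IntervalIntegrable g volume 0 t
    · -- compare with the continuous bound G
      set C : ℝ := N * μ ^ j / (s ^ j * (Nat.factorial j : ℝ)) with hC
      have hCpos : 0 < C := by positivity
      set G : ℝ → ℝ := fun u =>
        μ * C * (Real.exp (s * ((j:ℝ)+1) * (t - u)) * (Real.exp (s * u) - 1) ^ j) with hG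
      have hGint : IntervalIntegrable G volume 0 t := by
        apply Continuous.intervalIntegrable
        continuity
      have hle : ∀ u ∈ Set.Icc (0:ℝ) t, g u ≤ G u := by
        intro u hu
        have hu0 : 0 ≤ u := hu.1
        have hib := ih u hu0
        have he : 0 < Real.exp (s * ((j:ℝ)+1) * (t - u)) := Real.exp_pos _
        have : f j u ≤ C * (Real.exp (s * u) - 1) ^ j := by
          rw [hC]; calc f j u ≤ _ := hib
          _ = N * μ ^ j / (s ^ j * (Nat.factorial j : ℝ)) * (Real.exp (s * u) - 1) ^ j := by
            ring
        calc g u = μ * Real.exp (s * ((j:ℝ)+1) * (t - u)) * f j u := rfl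
          _ ≤ μ * Real.exp (s * ((j:ℝ)+1) * (t - u)) * (C * (Real.exp (s * u) - 1) ^ j) := by
            apply mul_le_mul_of_nonneg_left this (by positivity)
          _ = G u := by rw [hG]; ring
      have hmono := intervalIntegral.integral_mono_on ht hint hGint hle
      have hGval : ∫ u in (0:ℝ)..t, G u =
          μ * C * ((Real.exp (s * t) - 1) ^ (j+1) / (((j:ℝ)+1) * s)) := by
        rw [hG]
        rw [intervalIntegral.integral_const_mul]
        rw [key_int s hs j t ht]
      calc f (j+1) t ≤ ∫ u in (0:ℝ)..t, g u := hrec''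
        _ ≤ ∫ u in (0:ℝ)..t, G u := hmono
        _ = μ * C * ((Real.exp (s * t) - 1) ^ (j+1) / (((j:ℝ)+1) * s)) := hGval
        _ = N * μ ^ (j+1) * (Real.exp (s * t) - 1) ^ (j+1) /
            (s ^ (j+1) * (Nat.factorial (j+1) : ℝ)) := by
          rw [hC, Nat.factorial_succ]
          have h1 : (s:ℝ) ^ j ≠ 0 := by positivity
          have h2 : (Nat.factorial j : ℝ) ≠ 0 := by positivity
          push_cast
          field_simp
          ring
    · rw [intervalIntegral.integral_undef hint] at hrec''
      exact le_trans hrec'' hRHS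
end

section
/- Under assumptions A1–A3 on the sequences (s_N), (μ_N) (as in the model with μ_N < s_N, both in (0,1)), one has log(1/s_N)/log(s_N/μ_N) → 0 as N → ∞; consequently log(s_N/μ_N) ~ log(1/μ_N), and for every a > 0 one has μ_N/s_N^a → 0 as N → ∞. -/
open Filter

/-- Under A1–A3, `log(1/s_N)/log(s_N/μ_N) → 0`; consequently
`log(s_N/μ_N) ~ log(1/μ_N)`, and for every `a > 0`, `μ_N / s_N^a → 0`. -/
theorem stmt16 (s μ : ℕ → ℝ)
    (hs : ∀ N, 0 < s N ∧ s N < 1) (hμ : ∀ N, 0 < μ N ∧ μ N < 1)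
    (hμs : ∀ N, μ N < s N)
    (hA1 : Tendsto (fun N : ℕ =>
        Real.log N / (Real.log (s N / μ N) * Real.log (1 / s N))) atTop atTop)
    (hA2 : Tendsto (fun N : ℕ =>
        Real.log N / (Real.log (s N / μ N)) ^ 2 *
          Real.log (Real.log N / Real.log (s N / μ N))) atTop (nhds 0))
    (hA3 : Tendsto (fun N : ℕ =>
        s N * Real.log N / Real.log (s N / μ N)) atTop (nhds 0)) :
    Tendsto (fun N : ℕ => Real.log (1 / s N) / Real.log (s N / μ N)) atTop (nhds 0) ∧
    Tendsto (fun N : ℕ => Real.log (s N / μ N) / Real.log (1 / μ N)) atTop (nhds 1) ∧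
    (∀ a : ℝ, 0 < a →
      Tendsto (fun N : ℕ => μ N / s N ^ a) atTop (nhds 0)) := by
  have hL : ∀ N, 0 < Real.log (s N / μ N) := fun N =>
    Real.log_pos ((one_lt_div (hμ N).1).mpr (hμs N))
  have hℓ : ∀ N, 0 < Real.log (1 / s N) := fun N =>
    Real.log_pos ((one_lt_div (hs N).1).mpr (hs N).2)
  have hlogN : Tendsto (fun N : ℕ => Real.log N) atTop atTop :=
    Real.tendsto_log_atTop.comp tendsto_natCast_atTop_atTop
  -- Step 1 : L → ∞
  have hLtop : Tendsto (fun N : ℕ => Real.log (s N / μ N)) atTop atTop := by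
    rw [tendsto_atTop]
    intro M
    set M' : ℝ := max M 1 with hM'
    have hM'1 : (1:ℝ) ≤ M' := le_max_right _ _
    have hM'0 : (0:ℝ) < M' := lt_of_lt_of_le one_pos hM'1
    have hx1 : ∀ᶠ N : ℕ in atTop,
        Real.log N / (Real.log (s N / μ N)) ^ 2 *
          Real.log (Real.log N / Real.log (s N / μ N)) < 1 := by
      have := hA2.eventually (gt_mem_nhds one_pos)
      exact this
    have hlogB : ∀ᶠ N : ℕ in atTop,
        max (Real.exp 1 * M') (M' ^ 2) ≤ Real.log N :=
      hlogN.eventually_ge_atTop _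
    filter_upwards [hx1, hlogB] with N hx hB
    by_contra hcon
    push_neg at hcon
    have hLM : Real.log (s N / μ N) < M' := lt_of_lt_of_le hcon (le_max_left _ _)
    have hlN : (0:ℝ) ≤ Real.log N :=
      le_trans (le_trans (by positivity) (le_max_right _ _)) hB
    have hq1 : (1:ℝ) ≤ Real.log N / (Real.log (s N / μ N)) ^ 2 := by
      rw [le_div_iff₀ (pow_pos (hL N) 2)]
      calc (1:ℝ) * Real.log (s N / μ N) ^ 2 ≤ M' ^ 2 := by
            rw [one_mul]
            exact pow_le_pow_left₀ (le_of_lt (hL N)) (le_of_lt hLM) 2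
        _ ≤ Real.log N := le_trans (le_max_right _ _) hB
    have hr1 : (1:ℝ) ≤ Real.log (Real.log N / Real.log (s N / μ N)) := by
      rw [Real.le_log_iff_exp_le]
      · rw [le_div_iff₀ (hL N)]
        calc Real.exp 1 * Real.log (s N / μ N) ≤ Real.exp 1 * M' :=
              mul_le_mul_of_nonneg_left (le_of_lt hLM) (le_of_lt (Real.exp_pos 1))
          _ ≤ Real.log N := le_trans (le_max_left _ _) hB
      · have h1 : Real.exp 1 * Real.log (s N / μ N) ≤ Real.log N := by
          calc Real.exp 1 * Real.log (s N / μ N) ≤ Real.exp 1 * M' :=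
                mul_le_mul_of_nonneg_left (le_of_lt hLM) (le_of_lt (Real.exp_pos 1))
            _ ≤ Real.log N := le_trans (le_max_left _ _) hB
        have h0 := lt_of_lt_of_le (mul_pos (Real.exp_pos 1) (hL N)) h1
        exact div_pos h0 (hL N)
    have : (1:ℝ) ≤ Real.log N / (Real.log (s N / μ N)) ^ 2 *
        Real.log (Real.log N / Real.log (s N / μ N)) := by
      calc (1:ℝ) = 1 * 1 := by ring
        _ ≤ _ := mul_le_mul hq1 hr1 zero_le_one (le_trans zero_le_one hq1)
    linarith
  -- Step 2 : log N / L² → 0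
  have hq0 : Tendsto (fun N : ℕ => Real.log N / (Real.log (s N / μ N)) ^ 2)
      atTop (nhds 0) := by
    have hg : Tendsto (fun N : ℕ => 2 / Real.log (s N / μ N) +
        |Real.log N / (Real.log (s N / μ N)) ^ 2 *
          Real.log (Real.log N / Real.log (s N / μ N))| / Real.log 2)
        atTop (nhds 0) := by
      have h1 : Tendsto (fun N : ℕ => 2 / Real.log (s N / μ N)) atTop (nhds 0) :=
        tendsto_const_nhds.div_atTop hLtop
      have h2 : Tendsto (fun N : ℕ =>
          |Real.log N / (Real.log (s N / μ N)) ^ 2 *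
            Real.log (Real.log N / Real.log (s N / μ N))| / Real.log 2)
          atTop (nhds 0) := by
        have := (hA2.abs).div_const (Real.log 2)
        simpa using this
      simpa using h1.add h2
    apply squeeze_zero' _ _ hg
    · filter_upwards [eventually_ge_atTop 1] with N hN
      have : (0:ℝ) ≤ Real.log N := Real.log_natCast_nonneg N
      positivity
    · filter_upwards [eventually_ge_atTop 1] with N hN
      have hlN : (0:ℝ) ≤ Real.log N := Real.log_natCast_nonneg N
      have hq : (0:ℝ) ≤ Real.log N / (Real.log (s N / μ N)) ^ 2 := by positivity
      rcases le_or_gt (Real.log N / Real.log (s N / μ N)) 2 with h | h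
      · have key : Real.log N / (Real.log (s N / μ N)) ^ 2 ≤
            2 / Real.log (s N / μ N) := by
          rw [sq, ← div_div]
          exact (div_le_div_iff_of_pos_right (hL N)).mpr h
        have habs : (0:ℝ) ≤ |Real.log N / (Real.log (s N / μ N)) ^ 2 *
            Real.log (Real.log N / Real.log (s N / μ N))| / Real.log 2 := by
          have : (0:ℝ) < Real.log 2 := Real.log_pos one_lt_two
          positivity
        linarith
      · have hlog2 : (0:ℝ) < Real.log 2 := Real.log_pos one_lt_two
        have hlogu : Real.log 2 ≤ Real.log (Real.log N / Real.log (s N / μ N)) :=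
          Real.log_le_log two_pos (le_of_lt h)
        have key : Real.log N / (Real.log (s N / μ N)) ^ 2 * Real.log 2 ≤
            Real.log N / (Real.log (s N / μ N)) ^ 2 *
              Real.log (Real.log N / Real.log (s N / μ N)) :=
          mul_le_mul_of_nonneg_left hlogu hq
        have key2 : Real.log N / (Real.log (s N / μ N)) ^ 2 ≤
            |Real.log N / (Real.log (s N / μ N)) ^ 2 *
              Real.log (Real.log N / Real.log (s N / μ N))| / Real.log 2 := by
          rw [le_div_iff₀ hlog2]
          exact le_trans key (le_abs_self _)
        have h2L : (0:ℝ) ≤ 2 / Real.log (s N / μ N) := by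
          have := hL N; positivity
        linarith
  -- Step 3 : ℓ/L → 0
  have hc1 : Tendsto (fun N : ℕ => Real.log (1 / s N) / Real.log (s N / μ N))
      atTop (nhds 0) := by
    have hinv : Tendsto (fun N : ℕ =>
        (Real.log N / (Real.log (s N / μ N) * Real.log (1 / s N)))⁻¹) atTop (nhds 0) :=
      hA1.inv_tendsto_atTop
    have hprod := hinv.mul hq0
    rw [zero_mul] at hprod
    apply hprod.congr'
    filter_upwards [eventually_gt_atTop 1] with N hN
    have hlN : (0:ℝ) < Real.log N := Real.log_pos (by exact_mod_cast hN)
    have hLN := hL N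
    have hℓN := hℓ N
    field_simp
  refine ⟨hc1, ?_, ?_⟩
  -- Step 4 : L/log(1/μ) → 1
  · have h1 : Tendsto (fun N : ℕ =>
        (1 + Real.log (1 / s N) / Real.log (s N / μ N))⁻¹) atTop (nhds 1) := by
      have := (tendsto_const_nhds.add hc1).inv₀ (by norm_num : (1:ℝ) + 0 ≠ 0)
      simpa using this
    apply h1.congr
    intro N
    have hLN := hL N
    have hℓN := hℓ N
    have hlogμ : Real.log (1 / μ N) = Real.log (s N / μ N) + Real.log (1 / s N) := by
      rw [← Real.log_mul (ne_of_gt (div_pos (hs N).1 (hμ N).1))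
        (ne_of_gt (one_div_pos.mpr (hs N).1))]
      congr 1
      field_simp
      rw [mul_comm, ← div_div, div_self (ne_of_gt (hs N).1)]
    rw [hlogμ]
    rw [inv_eq_iff_eq_inv, inv_div, add_div, div_self (ne_of_gt hLN)]
  -- Step 5 : μ/s^a → 0
  · intro a ha
    have h2 : Tendsto (fun N : ℕ =>
        (a - 1) * (Real.log (1 / s N) / Real.log (s N / μ N)) - 1) atTop (nhds (-1)) := by
      have := (hc1.const_mul (a - 1)).sub_const 1
      simpa using this
    have h3 : Tendsto (fun N : ℕ => Real.log (s N / μ N) *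
        ((a - 1) * (Real.log (1 / s N) / Real.log (s N / μ N)) - 1)) atTop atBot :=
      hLtop.atTop_mul_neg (by norm_num) h2
    have h4 : Tendsto (fun N : ℕ =>
        Real.exp (Real.log (s N / μ N) *
          ((a - 1) * (Real.log (1 / s N) / Real.log (s N / μ N)) - 1))) atTop (nhds 0) :=
      Real.tendsto_exp_atBot.comp h3
    apply h4.congr
    intro N
    have hs0 := (hs N).1
    have hμ0 := (hμ N).1
    have hLN := hL N
    have hexpr : Real.log (s N / μ N) *
        ((a - 1) * (Real.log (1 / s N) / Real.log (s N / μ N)) - 1) =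
        Real.log (μ N) - Real.log (s N) * a := by
      rw [Real.log_div (ne_of_gt hs0) (ne_of_gt hμ0), one_div, Real.log_inv]
      have hne : Real.log (s N) - Real.log (μ N) ≠ 0 := by
        have := hLN
        rw [Real.log_div (ne_of_gt hs0) (ne_of_gt hμ0)] at this
        exact ne_of_gt this
      field_simp
      ring
    rw [hexpr, Real.exp_sub, Real.exp_log hμ0, ← Real.rpow_def_of_pos hs0]
end
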